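/- Let ψ be real-valued, C^∞ on a neighborhood of the closed unit disc in ℝ² and harmonic on the open unit disc. Then lim_{T→∞} limsup_{N→∞} | E ψ(X_{n_ε}) − ψ(0,0) | = 0, where for each T and N the parameters are δ = T N^{−5}, ε = 1/N. -/

import Mathlib

open MeasureTheory Filter
open scoped ENNReal MeasureTheory

noncomputable section

/-- Lebesgue measure restricted to `Ω = [0,1)`. -/
def P : Measure ℝ := volume.restrict (Set.Ico 0 1)

/-- Rademacher variable `ε_k` : `+1` on the right half of the dyadic interval of
generation `k` containing `x`, `-1` otherwise. -/
def rad (k : ℕ) (x : ℝ) : ℝ := if Odd ⌊(2 : ℝ) ^ (k + 1) * x⌋ then 1 else -1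

/-- Increment `dB¹_l = 1{ε_{l-1} = -1} ε_l √(2δ)`. -/
def dB1 (δ : ℝ) (l : ℕ) (x : ℝ) : ℝ :=
  (if rad (l - 1) x = -1 then 1 else 0) * rad l x * Real.sqrt (2 * δ)

/-- Increment `dB²_l = 1{ε_{l-1} = +1} ε_l √(2δ)`. -/
def dB2 (δ : ℝ) (l : ℕ) (x : ℝ) : ℝ :=
  (if rad (l - 1) x = 1 then 1 else 0) * rad l x * Real.sqrt (2 * δ)

/-- First coordinate of the discrete random walk. -/
def B1 (δ : ℝ) (k : ℕ) (x : ℝ) : ℝ := ∑ l ∈ Finset.Icc 1 k, dB1 δ l x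

/-- Second coordinate of the discrete random walk. -/
def B2 (δ : ℝ) (k : ℕ) (x : ℝ) : ℝ := ∑ l ∈ Finset.Icc 1 k, dB2 δ l x

/-- The planar random walk `B_k = (B¹_k, B²_k)`. -/
def Bpt (δ : ℝ) (k : ℕ) (x : ℝ) : ℝ × ℝ := (B1 δ k x, B2 δ k x)

/-- Euclidean norm of the planar walk at step `k`. -/
def Bnorm (δ : ℝ) (k : ℕ) (x : ℝ) : ℝ := Real.sqrt (B1 δ k x ^ 2 + B2 δ k x ^ 2)

/-- Coarse increment `dX¹_{n+1} = Σ_{l=1}^N dB¹_{nN+l}`. -/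
def dX1 (δ : ℝ) (N n : ℕ) (x : ℝ) : ℝ := ∑ l ∈ Finset.Icc 1 N, dB1 δ (n * N + l) x

/-- Coarse increment `dX²_{n+1} = Σ_{l=1}^N dB²_{nN+l}`. -/
def dX2 (δ : ℝ) (N n : ℕ) (x : ℝ) : ℝ := ∑ l ∈ Finset.Icc 1 N, dB2 δ (n * N + l) x

/-- The σ-algebra `F_k` generated by `ε_0, …, ε_k`. -/
def Ffil (k : ℕ) : MeasurableSpace ℝ :=
  ⨆ i ∈ Finset.Iic k, MeasurableSpace.comap (rad i) (inferInstance : MeasurableSpace ℝ)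

/-- The stopping index `n_ε(x)` : the minimum of `N⁴` and the first `n ∈ [1, N⁴]`
with `|X_n(x)| > 1 - ε`, where `X_n = B_{nN}`. -/
def nstop (δ ε : ℝ) (N : ℕ) (x : ℝ) : ℕ :=
  sInf (insert (N ^ 4) {n | 1 ≤ n ∧ n ≤ N ^ 4 ∧ 1 - ε < Bnorm δ (n * N) x})

/-- The closed unit disc in `ℝ²`. -/
def closedDisc : Set (ℝ × ℝ) := {p | p.1 ^ 2 + p.2 ^ 2 ≤ 1}

/-- The open unit disc in `ℝ²`. -/
def openDisc : Set (ℝ × ℝ) := {p | p.1 ^ 2 + p.2 ^ 2 < 1}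

/-- First partial derivative `∂₁f`. -/
def pd1 {X : Type*} [NormedAddCommGroup X] [NormedSpace ℝ X]
    (f : ℝ × ℝ → X) (y : ℝ × ℝ) : X := fderiv ℝ f y (1, 0)

/-- Second partial derivative `∂₂f`. -/
def pd2 {X : Type*} [NormedAddCommGroup X] [NormedSpace ℝ X]
    (f : ℝ × ℝ → X) (y : ℝ × ℝ) : X := fderiv ℝ f y (0, 1)

/-- The discrete martingale transform `M^f_k = f(0,0) + Σ_{l=1}^k ∇f(B_{l-1})·dB_l`. -/
def Mf {X : Type*} [NormedAddCommGroup X] [NormedSpace ℝ X]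
    (f : ℝ × ℝ → X) (δ : ℝ) (k : ℕ) (x : ℝ) : X :=
  f (0, 0) + ∑ l ∈ Finset.Icc 1 k,
    (dB1 δ l x • pd1 f (Bpt δ (l - 1) x) + dB2 δ l x • pd2 f (Bpt δ (l - 1) x))

/-- The discrete martingale transform `M^g_k = Σ_{l=1}^k ∇g(B_{l-1})·dB_l`. -/
def Mg {X : Type*} [NormedAddCommGroup X] [NormedSpace ℝ X]
    (g : ℝ × ℝ → X) (δ : ℝ) (k : ℕ) (x : ℝ) : X :=
  ∑ l ∈ Finset.Icc 1 k,
    (dB1 δ l x • pd1 g (Bpt δ (l - 1) x) + dB2 δ l x • pd2 g (Bpt δ (l - 1) x))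


namespace S16

/-- `W` depends only on the dyadic interval of generation `m` containing `x`. -/
def DyDep {α : Type*} (m : ℕ) (W : ℝ → α) : Prop :=
  ∀ x y : ℝ, ⌊(2:ℝ)^m * x⌋ = ⌊(2:ℝ)^m * y⌋ → W x = W y

lemma floor_pow_aux (m d : ℕ) (x : ℝ) :
    ⌊(2:ℝ)^m * x⌋ = ⌊(2:ℝ)^(m+d) * x⌋ / 2^d := by
  have h2d : (0:ℤ) < 2^d := by positivity
  have hle : (↑⌊(2:ℝ)^(m+d) * x⌋ : ℝ) ≤ 2^(m+d) * x := Int.floor_le _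
  have hlt : 2^(m+d) * x < ⌊(2:ℝ)^(m+d) * x⌋ + 1 := Int.lt_floor_add_one _
  obtain ⟨j, hj⟩ : ∃ j : ℤ, j = ⌊(2:ℝ)^(m+d) * x⌋ := ⟨_, rfl⟩
  rw [← hj] at hle hlt ⊢
  have hmod1 : (0:ℤ) ≤ j % 2^d := Int.emod_nonneg _ (by positivity)
  have hmod2 : j % 2^d < 2^d := Int.emod_lt_of_pos _ h2d
  have hdm : 2^d * (j / 2^d) + j % 2^d = j := Int.mul_ediv_add_emod _ _
  have hpow : (2:ℝ)^(m+d) * x = 2^d * (2^m * x) := by rw [pow_add]; ring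
  rw [hpow] at hle hlt
  have hpos : (0:ℝ) < 2^d := by positivity
  have key1 : ((j / 2^d : ℤ) : ℝ) ≤ 2^m * x := by
    have h1 : (2^d : ℤ) * (j / 2^d) ≤ j := by omega
    have h1' : (2:ℝ)^d * ((j / 2^d : ℤ) : ℝ) ≤ (j:ℝ) := by exact_mod_cast h1
    have := le_trans h1' hle
    exact (mul_le_mul_iff_right₀ hpos).mp this
  have key2 : 2^m * x < ((j / 2^d : ℤ) : ℝ) + 1 := by
    have h1 : j + 1 ≤ 2^d * (j / 2^d + 1) := by
      have hexp : (2:ℤ)^d * (j / 2^d + 1) = 2^d * (j / 2^d) + 2^d := by ring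
      omega
    have h1' : (j:ℝ) + 1 ≤ (2:ℝ)^d * (((j / 2^d : ℤ) : ℝ) + 1) := by exact_mod_cast h1
    have := lt_of_lt_of_le hlt h1'
    exact (mul_lt_mul_iff_right₀ hpos).mp this
  exact Int.floor_eq_iff.mpr ⟨key1, key2⟩

lemma floor_agree {m m' : ℕ} (h : m ≤ m') {x y : ℝ}
    (hxy : ⌊(2:ℝ)^m' * x⌋ = ⌊(2:ℝ)^m' * y⌋) : ⌊(2:ℝ)^m * x⌋ = ⌊(2:ℝ)^m * y⌋ := by
  obtain ⟨d, rfl⟩ := Nat.exists_eq_add_of_le h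
  rw [floor_pow_aux m d x, floor_pow_aux m d y, hxy]

/-- `x` and `y` have the same Rademacher signs of generations `< m`. -/
def Agree (m : ℕ) (x y : ℝ) : Prop := ∀ k, k < m → rad k x = rad k y

lemma agree_of_floor {m : ℕ} {x y : ℝ}
    (hxy : ⌊(2:ℝ)^m * x⌋ = ⌊(2:ℝ)^m * y⌋) : Agree m x y := by
  intro k hk
  unfold rad
  rw [floor_agree (by omega : k + 1 ≤ m) hxy]

lemma Agree.mono {m m' : ℕ} (h : m ≤ m') {x y : ℝ} (ha : Agree m' x y) : Agree m x y :=
  fun k hk => ha k (lt_of_lt_of_le hk h)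

lemma DyDep.of_agree {α : Type*} {m : ℕ} {W : ℝ → α}
    (h : ∀ x y, Agree m x y → W x = W y) : DyDep m W :=
  fun x y hxy => h x y (agree_of_floor hxy)

lemma DyDep.eq_floor {α : Type*} {m : ℕ} {W : ℝ → α} (h : DyDep m W) (x : ℝ) :
    W x = W ((⌊(2:ℝ)^m * x⌋ : ℤ) / 2^m) := by
  apply h
  have h3 : (2:ℝ)^m * ((⌊(2:ℝ)^m * x⌋ : ℤ) / 2^m) = ((⌊(2:ℝ)^m * x⌋ : ℤ) : ℝ) := by
    field_simp
  rw [h3, Int.floor_intCast]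

lemma DyDep.measurable {m : ℕ} {W : ℝ → ℝ} (h : DyDep m W) : Measurable W := by
  have : W = (fun j : ℤ => W ((j:ℝ)/2^m)) ∘ (fun x : ℝ => ⌊(2:ℝ)^m * x⌋) := by
    funext x
    exact h.eq_floor x
  rw [this]
  exact measurable_from_top.comp (Int.measurable_floor.comp (measurable_const_mul _))

instance Pprob : IsProbabilityMeasure P :=
  ⟨by simp [P, Measure.restrict_apply, Real.volume_Ico]⟩

lemma DyDep.bound {m : ℕ} {W : ℝ → ℝ} (h : DyDep m W) :
    ∃ C : ℝ, 0 ≤ C ∧ ∀ x ∈ Set.Ico (0:ℝ) 1, |W x| ≤ C := by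
  have hne : (Finset.range (2^m)).Nonempty := ⟨0, Finset.mem_range.mpr (Nat.pow_pos (by norm_num))⟩
  obtain ⟨j0, hj0⟩ := hne
  refine ⟨(Finset.range (2^m)).sup' ⟨j0, hj0⟩ (fun j => |W ((j:ℝ)/2^m)|), ?_, ?_⟩
  · exact le_trans (abs_nonneg _) (Finset.le_sup' (fun j : ℕ => |W ((j:ℝ)/2^m)|) hj0)
  · intro x hx
    have hxw : W x = W ((⌊(2:ℝ)^m * x⌋ : ℤ) / 2^m) := h.eq_floor x
    have h0 : (0:ℤ) ≤ ⌊(2:ℝ)^m * x⌋ := Int.floor_nonneg.mpr (by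
      have := hx.1; positivity)
    have h1 : ⌊(2:ℝ)^m * x⌋ < (2:ℤ)^m := by
      rw [Int.floor_lt]
      push_cast
      have h2 : (0:ℝ) < 2^m := by positivity
      nlinarith [hx.2]
    have hmem : ⌊(2:ℝ)^m * x⌋.toNat ∈ Finset.range (2^m) := by
      rw [Finset.mem_range, ← Nat.cast_lt (α := ℤ), Int.toNat_of_nonneg h0]
      push_cast
      exact h1
    have hle := Finset.le_sup' (fun j : ℕ => |W ((j:ℝ)/2^m)|) hmem
    have hcast : ((⌊(2:ℝ)^m * x⌋.toNat : ℕ) : ℝ) = ((⌊(2:ℝ)^m * x⌋ : ℤ) : ℝ) := by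
      exact_mod_cast congrArg (Int.cast : ℤ → ℝ) (Int.toNat_of_nonneg h0)
    rw [hxw, ← hcast]
    exact hle

lemma DyDep.integrable {m : ℕ} {W : ℝ → ℝ} (h : DyDep m W) : Integrable W P := by
  obtain ⟨C, _, hC⟩ := h.bound
  refine ⟨h.measurable.aestronglyMeasurable, ?_⟩
  apply HasFiniteIntegral.of_bounded (C := C)
  have := ae_restrict_mem (μ := volume) (measurableSet_Ico : MeasurableSet (Set.Ico (0:ℝ) 1))
  rw [P]
  filter_upwards [this] with x hx
  simpa [Real.norm_eq_abs] using hC x hx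

lemma integral_dyadic {m : ℕ} {W : ℝ → ℝ} (h : DyDep m W) :
    ∫ x, W x ∂P = ∑ j ∈ Finset.range (2^m), ((2:ℝ)^m)⁻¹ * W ((j:ℝ)/2^m) := by
  have hpos : (0:ℝ) < 2^m := by positivity
  have hunion : Set.Ico (0:ℝ) 1 = ⋃ j ∈ Finset.range (2^m), Set.Ico ((j:ℝ)/2^m) (((j:ℝ)+1)/2^m) := by
    ext x
    simp only [Set.mem_Ico, Set.mem_iUnion, Finset.mem_range]
    constructor
    · rintro ⟨h0, h1⟩
      have hj0 : (0:ℤ) ≤ ⌊(2:ℝ)^m * x⌋ := Int.floor_nonneg.mpr (by positivity)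
      have hj1 : ⌊(2:ℝ)^m * x⌋ < (2:ℤ)^m := by
        rw [Int.floor_lt]; push_cast; nlinarith
      have hcast : ((⌊(2:ℝ)^m * x⌋.toNat : ℕ) : ℝ) = ((⌊(2:ℝ)^m * x⌋ : ℤ) : ℝ) := by
        exact_mod_cast congrArg (Int.cast : ℤ → ℝ) (Int.toNat_of_nonneg hj0)
      refine ⟨⌊(2:ℝ)^m * x⌋.toNat, ?_, ?_, ?_⟩
      · rw [← Nat.cast_lt (α := ℤ), Int.toNat_of_nonneg hj0]
        push_cast
        exact hj1
      · rw [div_le_iff₀ hpos, hcast]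
        have := Int.floor_le ((2:ℝ)^m * x)
        linarith
      · rw [lt_div_iff₀ hpos, hcast]
        have := Int.lt_floor_add_one ((2:ℝ)^m * x)
        linarith
    · rintro ⟨j, hj, h0, h1⟩
      constructor
      · have : (0:ℝ) ≤ (j:ℝ)/2^m := by positivity
        linarith
      · have hj' : (j:ℝ) + 1 ≤ 2^m := by
          have h5 : ((j+1 : ℕ) : ℝ) ≤ ((2^m : ℕ) : ℝ) := by
            exact_mod_cast Nat.succ_le_of_lt hj
          push_cast at h5
          linarith
        have : ((j:ℝ)+1)/2^m ≤ 1 := by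
          rw [div_le_one hpos]; linarith
        linarith
  have hfloor : ∀ j : ℕ, ∀ x ∈ Set.Ico ((j:ℝ)/2^m) (((j:ℝ)+1)/2^m), W x = W ((j:ℝ)/2^m) := by
    intro j x hx
    apply h
    have h1 : ((j:ℝ)) ≤ 2^m * x := by
      have := hx.1
      rw [div_le_iff₀ hpos] at this
      linarith
    have h2 : 2^m * x < (j:ℝ) + 1 := by
      have := hx.2
      rw [lt_div_iff₀ hpos] at this
      linarith
    have h3 : (2:ℝ)^m * ((j:ℝ)/2^m) = (j:ℝ) := by field_simp
    rw [h3]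
    have h4 : ((j:ℕ):ℝ) = (((j:ℤ)):ℝ) := by push_cast; rfl
    rw [h4, Int.floor_intCast]
    exact (Int.floor_eq_iff.mpr ⟨by push_cast; linarith, by push_cast; linarith⟩)
  rw [P, hunion, integral_biUnion_finset]
  · apply Finset.sum_congr rfl
    intro j hj
    rw [setIntegral_congr_fun measurableSet_Ico (hfloor j), setIntegral_const]
    rw [measureReal_def, Real.volume_Ico]
    have heq : ((j:ℝ)+1)/2^m - (j:ℝ)/2^m = ((2:ℝ)^m)⁻¹ := by
      field_simp
      ring
    rw [heq, ENNReal.toReal_ofReal (by positivity)]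
    simp [smul_eq_mul]
  · intro i _
    exact measurableSet_Ico
  · intro i hi j hj hij
    simp only [Function.onFun]
    apply Set.Ico_disjoint_Ico.mpr
    rcases lt_or_gt_of_ne hij with h' | h'
    · calc min (((i:ℝ)+1)/2^m) (((j:ℝ)+1)/2^m) ≤ ((i:ℝ)+1)/2^m := min_le_left _ _
        _ ≤ (j:ℝ)/2^m := by
            have hij' : (i:ℝ) + 1 ≤ (j:ℝ) := by exact_mod_cast h'
            gcongr
        _ ≤ max ((i:ℝ)/2^m) ((j:ℝ)/2^m) := le_max_right _ _
    · calc min (((i:ℝ)+1)/2^m) (((j:ℝ)+1)/2^m) ≤ ((j:ℝ)+1)/2^m := min_le_right _ _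
        _ ≤ (i:ℝ)/2^m := by
            have hij' : (j:ℝ) + 1 ≤ (i:ℝ) := by exact_mod_cast h'
            gcongr
        _ ≤ max ((i:ℝ)/2^m) ((j:ℝ)/2^m) := le_max_left _ _
  · intro i hi
    refine (show IntegrableOn W (Set.Ico 0 1) volume from h.integrable).mono_set ?_
    intro x hx
    rw [hunion]
    exact Set.mem_biUnion hi hx

end S16
namespace S16

lemma rad_cases (k : ℕ) (x : ℝ) : rad k x = 1 ∨ rad k x = -1 := by
  unfold rad; split <;> simp

lemma rad_sq (k : ℕ) (x : ℝ) : rad k x * rad k x = 1 := by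
  rcases rad_cases k x with h | h <;> rw [h] <;> norm_num

lemma abs_rad (k : ℕ) (x : ℝ) : |rad k x| = 1 := by
  rcases rad_cases k x with h | h <;> rw [h] <;> norm_num

lemma sum_range_two_mul (n : ℕ) (f : ℕ → ℝ) :
    ∑ j ∈ Finset.range (2*n), f j = ∑ i ∈ Finset.range n, (f (2*i) + f (2*i+1)) := by
  induction n with
  | zero => simp
  | succ n ih =>
    have h1 : 2*(n+1) = (2*n)+1+1 := by ring
    rw [h1, Finset.sum_range_succ, Finset.sum_range_succ, ih, Finset.sum_range_succ]
    ring

lemma integral_mul_rad {k : ℕ} {G : ℝ → ℝ} (h : DyDep k G) :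
    ∫ x, G x * rad k x ∂P = 0 := by
  have hGr : DyDep (k+1) (fun x => G x * rad k x) := by
    intro x y hxy
    have h1 : G x = G y := h x y (floor_agree (Nat.le_succ k) hxy)
    have h2 : rad k x = rad k y := by unfold rad; rw [hxy]
    simp only [h1, h2]
  rw [integral_dyadic hGr]
  have h2 : (2:ℕ)^(k+1) = 2 * 2^k := by ring
  rw [h2, sum_range_two_mul]
  apply Finset.sum_eq_zero
  intro i hi
  have hpow : ((2:ℝ))^(k+1) ≠ 0 := by positivity
  have hkpow : ((2:ℝ))^k ≠ 0 := by positivity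
  set a : ℝ := ((2*i : ℕ):ℝ)/2^(k+1) with ha
  set b : ℝ := ((2*i+1 : ℕ):ℝ)/2^(k+1) with hb
  have hfa : (2:ℝ)^(k+1) * a = ((2*i:ℕ):ℝ) := by
    rw [ha]; field_simp
  have hfb : (2:ℝ)^(k+1) * b = ((2*i+1:ℕ):ℝ) := by
    rw [hb]; field_simp
  have hrada : rad k a = -1 := by
    unfold rad
    rw [hfa]
    have : ⌊((2*i:ℕ):ℝ)⌋ = ((2*i:ℕ) : ℤ) := Int.floor_natCast _
    rw [this, if_neg]
    intro hodd
    rw [Int.odd_iff] at hodd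
    omega
  have hradb : rad k b = 1 := by
    unfold rad
    rw [hfb]
    have : ⌊((2*i+1:ℕ):ℝ)⌋ = ((2*i+1:ℕ) : ℤ) := Int.floor_natCast _
    rw [this, if_pos]
    rw [Int.odd_iff]
    omega
  have hGab : G a = G b := by
    apply h
    have h5 : (2:ℝ)^k * a = (i:ℝ) := by
      rw [ha]
      push_cast
      rw [pow_succ]
      field_simp
    have h6 : (2:ℝ)^k * b = (i:ℝ) + 1/2 := by
      rw [hb]
      push_cast
      rw [pow_succ]
      field_simp
    rw [h5, h6]
    rw [show ((i:ℕ):ℝ) = (((i:ℕ):ℤ):ℝ) by push_cast; rfl, Int.floor_intCast]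
    symm
    apply Int.floor_eq_iff.mpr
    constructor
    · push_cast; linarith
    · push_cast; linarith
  simp only [hrada, hradb, hGab]
  ring

lemma integral_pair {k : ℕ} {G1 G2 : ℝ → ℝ} (h1 : DyDep k G1) (h2 : DyDep k G2) :
    ∫ x, ((if rad k x = -1 then (1:ℝ) else 0) * G1 x + (if rad k x = 1 then (1:ℝ) else 0) * G2 x) ∂P
      = (∫ x, G1 x ∂P + ∫ x, G2 x ∂P) / 2 := by
  have key : ∀ x, (if rad k x = -1 then (1:ℝ) else 0) * G1 x + (if rad k x = 1 then (1:ℝ) else 0) * G2 x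
      = ((G1 x + G2 x)/2) + (((G2 x - G1 x)/2) * rad k x) := by
    intro x
    rcases rad_cases k x with h | h <;> rw [h] <;> norm_num <;> ring
  simp only [key]
  have hI1 : Integrable (fun x => (G1 x + G2 x)/2) P := by
    apply DyDep.integrable (m := k)
    intro x y hxy
    simp only [h1 x y hxy, h2 x y hxy]
  have hI2 : Integrable (fun x => ((G2 x - G1 x)/2) * rad k x) P := by
    apply DyDep.integrable (m := k+1)
    intro x y hxy
    have e1 : G1 x = G1 y := h1 x y (floor_agree (Nat.le_succ k) hxy)
    have e2 : G2 x = G2 y := h2 x y (floor_agree (Nat.le_succ k) hxy)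
    have e3 : rad k x = rad k y := by unfold rad; rw [hxy]
    simp only [e1, e2, e3]
  rw [integral_add hI1 hI2]
  have hz : ∫ x, ((G2 x - G1 x)/2) * rad k x ∂P = 0 := by
    apply integral_mul_rad
    intro x y hxy
    simp only [h1 x y hxy, h2 x y hxy]
  rw [hz, add_zero]
  have e4 : (fun x => (G1 x + G2 x)/2) = fun x => (2:ℝ)⁻¹ * (G1 x + G2 x) := by
    funext x; ring
  rw [e4, integral_const_mul, integral_add (h1.integrable) (h2.integrable)]
  ring

lemma integral_abs_le {f : ℝ → ℝ} {C : ℝ} (hf : Integrable f P)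
    (h : ∀ x, |f x| ≤ C) : |∫ x, f x ∂P| ≤ C := by
  have := norm_integral_le_of_norm_le_const (μ := P) (f := f) (C := C)
    (Filter.Eventually.of_forall (fun x => by simpa [Real.norm_eq_abs] using h x))
  simpa [Real.norm_eq_abs] using this

end S16
namespace S16

lemma sqrt_add_sq_le (a b c d : ℝ) :
    Real.sqrt ((a+c)^2 + (b+d)^2) ≤ Real.sqrt (a^2+b^2) + Real.sqrt (c^2+d^2) := by
  have h1 : 0 ≤ Real.sqrt (a^2+b^2) := Real.sqrt_nonneg _
  have h2 : 0 ≤ Real.sqrt (c^2+d^2) := Real.sqrt_nonneg _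
  have e1 : Real.sqrt (a^2+b^2)^2 = a^2+b^2 := Real.sq_sqrt (by positivity)
  have e2 : Real.sqrt (c^2+d^2)^2 = c^2+d^2 := Real.sq_sqrt (by positivity)
  have hcs : a*c+b*d ≤ Real.sqrt (a^2+b^2) * Real.sqrt (c^2+d^2) := by
    nlinarith [sq_nonneg (a*d - b*c), mul_nonneg h1 h2, sq_nonneg (a*c+b*d)]
  have hX : (a+c)^2 + (b+d)^2 ≤ (Real.sqrt (a^2+b^2) + Real.sqrt (c^2+d^2))^2 := by
    nlinarith [hcs]
  calc Real.sqrt ((a+c)^2 + (b+d)^2)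
      ≤ Real.sqrt ((Real.sqrt (a^2+b^2) + Real.sqrt (c^2+d^2))^2) := Real.sqrt_le_sqrt hX
    _ = _ := Real.sqrt_sq (by positivity)

lemma sqrt_add_one_le (a b t : ℝ) :
    Real.sqrt ((a+t)^2 + b^2) ≤ Real.sqrt (a^2+b^2) + |t| := by
  have := sqrt_add_sq_le a b t 0
  simpa [Real.sqrt_sq_eq_abs] using this

lemma sqrt_add_two_le (a b t : ℝ) :
    Real.sqrt (a^2 + (b+t)^2) ≤ Real.sqrt (a^2+b^2) + |t| := by
  have := sqrt_add_sq_le a b 0 t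
  simpa [Real.sqrt_sq_eq_abs] using this

lemma B1_succ (δ : ℝ) (k : ℕ) (x : ℝ) : B1 δ (k+1) x = B1 δ k x + dB1 δ (k+1) x := by
  unfold B1
  rw [← Finset.sum_Icc_succ_top (by omega : 1 ≤ k+1)]

lemma B2_succ (δ : ℝ) (k : ℕ) (x : ℝ) : B2 δ (k+1) x = B2 δ k x + dB2 δ (k+1) x := by
  unfold B2
  rw [← Finset.sum_Icc_succ_top (by omega : 1 ≤ k+1)]

lemma dB_sq (δ : ℝ) (hδ : 0 ≤ δ) (l : ℕ) (x : ℝ) :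
    dB1 δ l x ^ 2 + dB2 δ l x ^ 2 = 2*δ := by
  have hs : Real.sqrt (2*δ) ^ 2 = 2*δ := Real.sq_sqrt (by linarith)
  have hr : rad l x ^ 2 = 1 := by rw [sq]; exact rad_sq l x
  unfold dB1 dB2
  rcases rad_cases (l-1) x with h | h
  · rw [h, if_neg (by norm_num : ¬ (1:ℝ) = -1), if_pos rfl]
    rw [zero_mul, zero_mul, one_mul, mul_pow, hs, hr]
    norm_num
  · rw [h, if_pos rfl, if_neg (by norm_num : ¬ (-1:ℝ) = 1)]
    rw [zero_mul, zero_mul, one_mul, mul_pow, hs, hr]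
    norm_num

lemma Bnorm_succ_le (δ : ℝ) (hδ : 0 ≤ δ) (k : ℕ) (x : ℝ) :
    Bnorm δ (k+1) x ≤ Bnorm δ k x + Real.sqrt (2*δ) := by
  unfold Bnorm
  rw [B1_succ, B2_succ]
  refine le_trans (sqrt_add_sq_le _ _ _ _) ?_
  gcongr
  rw [dB_sq δ hδ]

lemma Bnorm_le_of_le {δ : ℝ} (hδ : 0 ≤ δ) (x : ℝ) {k0 k : ℕ} (h : k0 ≤ k) :
    Bnorm δ k x ≤ Bnorm δ k0 x + ((k : ℝ) - (k0 : ℝ)) * Real.sqrt (2*δ) := by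
  induction k, h using Nat.le_induction with
  | base => simp
  | succ k hk ih =>
    have := Bnorm_succ_le δ hδ k x
    have hsq : 0 ≤ Real.sqrt (2*δ) := Real.sqrt_nonneg _
    have hcast : ((k+1 : ℕ) : ℝ) = (k:ℝ) + 1 := by push_cast; ring
    rw [hcast]
    have hk' : (k0:ℝ) ≤ (k:ℝ) := by exact_mod_cast hk
    nlinarith [ih, this]

lemma B1_zero (δ : ℝ) (x : ℝ) : B1 δ 0 x = 0 := by
  unfold B1
  rw [Finset.Icc_eq_empty (by omega)]
  simp

lemma B2_zero (δ : ℝ) (x : ℝ) : B2 δ 0 x = 0 := by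
  unfold B2
  rw [Finset.Icc_eq_empty (by omega)]
  simp

lemma Bpt_zero (δ : ℝ) (x : ℝ) : Bpt δ 0 x = ((0:ℝ), (0:ℝ)) := by
  unfold Bpt
  rw [B1_zero, B2_zero]

lemma Bnorm_zero (δ : ℝ) (x : ℝ) : Bnorm δ 0 x = 0 := by
  unfold Bnorm
  rw [B1_zero, B2_zero]
  simp

lemma rad_congr {m k : ℕ} (hk : k < m) {x y : ℝ} (h : Agree m x y) : rad k x = rad k y :=
  h k hk

lemma dB1_congr {δ : ℝ} {m l : ℕ} (hl : l < m) {x y : ℝ} (h : Agree m x y) :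
    dB1 δ l x = dB1 δ l y := by
  unfold dB1
  rw [rad_congr hl h, rad_congr (by omega : l - 1 < m) h]

lemma dB2_congr {δ : ℝ} {m l : ℕ} (hl : l < m) {x y : ℝ} (h : Agree m x y) :
    dB2 δ l x = dB2 δ l y := by
  unfold dB2
  rw [rad_congr hl h, rad_congr (by omega : l - 1 < m) h]

lemma B1_congr {δ : ℝ} {m k : ℕ} (hk : k < m) {x y : ℝ} (h : Agree m x y) :
    B1 δ k x = B1 δ k y := by
  unfold B1
  apply Finset.sum_congr rfl
  intro l hl
  rw [Finset.mem_Icc] at hl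
  exact dB1_congr (by omega) h

lemma B2_congr {δ : ℝ} {m k : ℕ} (hk : k < m) {x y : ℝ} (h : Agree m x y) :
    B2 δ k x = B2 δ k y := by
  unfold B2
  apply Finset.sum_congr rfl
  intro l hl
  rw [Finset.mem_Icc] at hl
  exact dB2_congr (by omega) h

lemma Bpt_congr {δ : ℝ} {m k : ℕ} (hk : k < m) {x y : ℝ} (h : Agree m x y) :
    Bpt δ k x = Bpt δ k y := by
  unfold Bpt
  rw [B1_congr hk h, B2_congr hk h]

lemma Bnorm_congr {δ : ℝ} {m k : ℕ} (hk : k < m) {x y : ℝ} (h : Agree m x y) :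
    Bnorm δ k x = Bnorm δ k y := by
  unfold Bnorm
  rw [B1_congr hk h, B2_congr hk h]

lemma nstop_le (δ ε : ℝ) (N : ℕ) (x : ℝ) : nstop δ ε N x ≤ N^4 :=
  csInf_le (OrderBot.bddBelow _) (Set.mem_insert _ _)

lemma le_nstop_iff {δ ε : ℝ} {N n : ℕ} {x : ℝ} (hn : n + 1 ≤ N^4) :
    n + 1 ≤ nstop δ ε N x ↔ ∀ m, 1 ≤ m → m ≤ n → Bnorm δ (m*N) x ≤ 1 - ε := by
  unfold nstop
  rw [le_csInf_iff (OrderBot.bddBelow _) ⟨N^4, Set.mem_insert _ _⟩]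
  constructor
  · intro h m h1 h2
    by_contra hc
    push_neg at hc
    have hmem : m ∈ insert (N^4) {n | 1 ≤ n ∧ n ≤ N^4 ∧ 1-ε < Bnorm δ (n*N) x} :=
      Set.mem_insert_of_mem _ ⟨h1, by omega, hc⟩
    have := h m hmem
    omega
  · intro h s hs
    rcases Set.mem_insert_iff.mp hs with rfl | hmem
    · exact hn
    · obtain ⟨h1, h2, h3⟩ := hmem
      by_contra hc
      push_neg at hc
      have := h s h1 (by omega)
      linarith

lemma chi_congr {δ ε : ℝ} {N n : ℕ} (hn : n+1 ≤ N^4) {x y : ℝ} (h : Agree (n*N+1) x y) :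
    (n+1 ≤ nstop δ ε N x ↔ n+1 ≤ nstop δ ε N y) := by
  rw [le_nstop_iff hn, le_nstop_iff hn]
  constructor <;> intro hh m h1 h2
  · rw [← Bnorm_congr (by calc m*N < m*N+1 := by omega
        _ ≤ n*N+1 := by have := Nat.mul_le_mul_right N h2; omega) h]
    exact hh m h1 h2
  · rw [Bnorm_congr (by calc m*N < m*N+1 := by omega
        _ ≤ n*N+1 := by have := Nat.mul_le_mul_right N h2; omega) h]
    exact hh m h1 h2

lemma nstop_congr {δ ε : ℝ} {N : ℕ} {x y : ℝ} (h : Agree (N^4*N+1) x y) :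
    nstop δ ε N x = nstop δ ε N y := by
  unfold nstop
  congr 1
  ext n
  simp only [Set.mem_insert_iff, Set.mem_setOf_eq]
  constructor <;> rintro (rfl | ⟨h1, h2, h3⟩)
  · left; rfl
  · right
    exact ⟨h1, h2, by rwa [← Bnorm_congr (by have := Nat.mul_le_mul_right N h2; omega) h]⟩
  · left; rfl
  · right
    exact ⟨h1, h2, by rwa [Bnorm_congr (by have := Nat.mul_le_mul_right N h2; omega) h]⟩

end S16
namespace S16

lemma isOpen_openDisc : IsOpen openDisc := by
  have : openDisc = {p : ℝ×ℝ | p.1^2 + p.2^2 < 1} := rfl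
  rw [this]
  exact isOpen_lt (by fun_prop) continuous_const

lemma convex_openDisc : Convex ℝ openDisc := by
  intro p hp q hq a b ha hb hab
  simp only [openDisc, Set.mem_setOf_eq] at *
  have key : (a•p + b•q).1^2 + (a•p + b•q).2^2
      ≤ a * (p.1^2+p.2^2) + b * (q.1^2+q.2^2) := by
    simp only [Prod.fst_add, Prod.snd_add, Prod.smul_fst, Prod.smul_snd, smul_eq_mul]
    nlinarith [mul_nonneg ha hb, sq_nonneg (p.1 - q.1), sq_nonneg (p.2 - q.2)]
  rcases eq_or_lt_of_le ha with h0 | ha'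
  · have hb1 : b = 1 := by linarith
    have h0' : a = 0 := h0.symm
    subst h0'
    subst hb1
    show ((0:ℝ)•p + (1:ℝ)•q).1^2 + ((0:ℝ)•p + (1:ℝ)•q).2^2 < 1
    nlinarith [key, hq]
  · have h1 : a * (p.1^2+p.2^2) < a * 1 := mul_lt_mul_of_pos_left hp ha'
    have h2 : b * (q.1^2+q.2^2) ≤ b * 1 := mul_le_mul_of_nonneg_left (le_of_lt hq) hb
    show (a•p + b•q).1^2 + (a•p + b•q).2^2 < 1
    nlinarith [key]

lemma openDisc_subset_closedDisc : openDisc ⊆ closedDisc := by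
  intro p hp
  show p.1^2 + p.2^2 ≤ 1
  exact le_of_lt hp

lemma isCompact_closedDisc : IsCompact closedDisc := by
  have hclosed : IsClosed closedDisc := isClosed_le (by fun_prop) continuous_const
  have hbdd : Bornology.IsBounded closedDisc := by
    apply Bornology.IsBounded.subset (Metric.isBounded_closedBall (x := ((0,0) : ℝ×ℝ)) (r := 1))
    intro p hp
    have hp' : p.1^2 + p.2^2 ≤ 1 := hp
    have h1 : p.1^2 ≤ 1 := by nlinarith [sq_nonneg p.2]
    have h2 : p.2^2 ≤ 1 := by nlinarith [sq_nonneg p.1]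
    have h1' : |p.1| ≤ 1 := by nlinarith [sq_abs p.1, sq_nonneg (|p.1| - 1), abs_nonneg p.1]
    have h2' : |p.2| ≤ 1 := by nlinarith [sq_abs p.2, sq_nonneg (|p.2| - 1), abs_nonneg p.2]
    rw [Metric.mem_closedBall, Prod.dist_eq]
    apply max_le
    · rw [Real.dist_eq]
      simpa using h1'
    · rw [Real.dist_eq]
      simpa using h2'
  exact Metric.isCompact_of_isClosed_isBounded hclosed hbdd

lemma mem_openDisc_of_sqrt {a b : ℝ} (h : Real.sqrt (a^2+b^2) < 1) :
    ((a,b) : ℝ×ℝ) ∈ openDisc := by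
  have h0 : 0 ≤ a^2+b^2 := by positivity
  have := Real.sq_sqrt h0
  have hs : 0 ≤ Real.sqrt (a^2+b^2) := Real.sqrt_nonneg _
  show a^2+b^2 < 1
  nlinarith

lemma pd_contDiffOn {U : Set (ℝ×ℝ)} (hU : IsOpen U) {f : ℝ×ℝ → ℝ}
    (hf : ContDiffOn ℝ (⊤:ℕ∞) f U) (e : ℝ×ℝ) :
    ContDiffOn ℝ (⊤:ℕ∞) (fun y => fderiv ℝ f y e) U :=
  (hf.fderiv_of_isOpen hU (by exact_mod_cast le_top)).clm_apply contDiffOn_const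

lemma opnorm_le_pd (f : ℝ×ℝ → ℝ) (y : ℝ×ℝ) :
    ‖fderiv ℝ f y‖ ≤ |pd1 f y| + |pd2 f y| := by
  apply ContinuousLinearMap.opNorm_le_bound _ (by positivity)
  intro v
  have hv : v = v.1 • ((1,0) : ℝ×ℝ) + v.2 • ((0,1) : ℝ×ℝ) := by
    ext <;> simp
  have hDv : fderiv ℝ f y v = v.1 * pd1 f y + v.2 * pd2 f y := by
    conv_lhs => rw [hv]
    rw [map_add, (fderiv ℝ f y).map_smul, (fderiv ℝ f y).map_smul]
    simp [pd1, pd2, smul_eq_mul]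
  rw [Real.norm_eq_abs, hDv]
  have h1 : |v.1| ≤ ‖v‖ := by
    have := norm_fst_le v
    rwa [Real.norm_eq_abs] at this
  have h2 : |v.2| ≤ ‖v‖ := by
    have := norm_snd_le v
    rwa [Real.norm_eq_abs] at this
  calc |v.1 * pd1 f y + v.2 * pd2 f y|
      ≤ |v.1 * pd1 f y| + |v.2 * pd2 f y| := abs_add_le _ _
    _ = |v.1| * |pd1 f y| + |v.2| * |pd2 f y| := by rw [abs_mul, abs_mul]
    _ ≤ ‖v‖ * |pd1 f y| + ‖v‖ * |pd2 f y| := by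
        gcongr
    _ = (|pd1 f y| + |pd2 f y|) * ‖v‖ := by ring

lemma lip_openDisc {U : Set (ℝ×ℝ)} (hU : IsOpen U) (hUD : openDisc ⊆ U)
    {g : ℝ×ℝ → ℝ} (hg : ContDiffOn ℝ (⊤:ℕ∞) g U) {C : ℝ}
    (hC : ∀ y ∈ openDisc, ‖fderiv ℝ g y‖ ≤ C)
    {p q : ℝ×ℝ} (hp : p ∈ openDisc) (hq : q ∈ openDisc) :
    |g p - g q| ≤ C * ‖p - q‖ := by
  have hdiff : DifferentiableOn ℝ g openDisc := (hg.differentiableOn (by simp)).mono hUD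
  have hbd : ∀ x ∈ openDisc, ‖fderivWithin ℝ g openDisc x‖ ≤ C := by
    intro x hx
    rw [fderivWithin_of_isOpen isOpen_openDisc hx]
    exact hC x hx
  have := convex_openDisc.norm_image_sub_le_of_norm_fderivWithin_le hdiff hbd hq hp
  rwa [Real.norm_eq_abs] at this

lemma taylor2 {U : Set (ℝ×ℝ)} (hU : IsOpen U) (hUD : openDisc ⊆ U)
    {f : ℝ×ℝ → ℝ} (hf : ContDiffOn ℝ (⊤:ℕ∞) f U)
    (e : ℝ×ℝ) (he1 : ‖e‖ = 1)
    {C : ℝ} (hC0 : 0 ≤ C)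
    (hlip : ∀ p ∈ openDisc, ∀ q ∈ openDisc,
      |fderiv ℝ (fun z => fderiv ℝ f z e) p e - fderiv ℝ (fun z => fderiv ℝ f z e) q e|
        ≤ C * ‖p - q‖)
    {b : ℝ×ℝ} {s : ℝ} (hmem : ∀ t ∈ Set.uIcc (0:ℝ) s, b + t • e ∈ openDisc) :
    |f (b + s • e) - f b - s * (fderiv ℝ f b e) - s^2/2 * (fderiv ℝ (fun z => fderiv ℝ f z e) b e)|
      ≤ C * |s|^3 := by
  set g1 : ℝ×ℝ → ℝ := fun z => fderiv ℝ f z e with hg1def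
  set g2 : ℝ×ℝ → ℝ := fun z => fderiv ℝ g1 z e with hg2def
  have hg1 : ContDiffOn ℝ (⊤:ℕ∞) g1 U := pd_contDiffOn hU hf e
  have hmem0 : b ∈ openDisc := by
    have := hmem 0 (Set.left_mem_uIcc)
    simpa using this
  have hline : ∀ (g : ℝ×ℝ → ℝ), ContDiffOn ℝ (⊤:ℕ∞) g U → ∀ t : ℝ, b + t•e ∈ openDisc →
      HasDerivAt (fun u => g (b + u•e)) (fderiv ℝ g (b+t•e) e) t := by
    intro g hg t ht
    have hdiff : DifferentiableAt ℝ g (b+t•e) :=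
      (hg.differentiableOn (by simp)).differentiableAt (hU.mem_nhds (hUD ht))
    have hl : HasDerivAt (fun u : ℝ => b + u•e) e t := by
      simpa using ((hasDerivAt_id t).smul_const e).const_add b
    exact hdiff.hasFDerivAt.comp_hasDerivAt t hl
  set A : ℝ := g1 b with hA
  set Q : ℝ := g2 b with hQ
  set η : ℝ → ℝ := fun t => f (b + t•e) - f b - t * A - t^2/2 * Q with hη
  set η' : ℝ → ℝ := fun t => g1 (b + t•e) - A - t * Q with hη'
  have hder1 : ∀ t : ℝ, b + t•e ∈ openDisc → HasDerivAt η (η' t) t := by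
    intro t ht
    have h1 := hline f hf t ht
    have h2 : HasDerivAt (fun u : ℝ => u * A) A t := hasDerivAt_mul_const A
    have h3 : HasDerivAt (fun u : ℝ => u^2/2*Q) (t*Q) t := by
      have h4 := ((hasDerivAt_pow 2 t).div_const 2).mul_const Q
      have h5 : ((2:ℕ):ℝ)*t^(2-1)/2*Q = t*Q := by norm_num
      rwa [h5] at h4
    exact ((h1.sub_const (f b)).sub h2).sub h3
  have hder2 : ∀ t : ℝ, b + t•e ∈ openDisc → HasDerivAt η' (g2 (b+t•e) - Q) t := by
    intro t ht
    have h1 := hline g1 hg1 t ht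
    have h2 : HasDerivAt (fun u : ℝ => u * Q) Q t := hasDerivAt_mul_const Q
    exact (h1.sub_const A).sub h2
  have habs : ∀ t ∈ Set.uIcc (0:ℝ) s, |t| ≤ |s| := by
    intro t ht
    rcases Set.mem_uIcc.mp ht with ⟨h1, h2⟩ | ⟨h1, h2⟩
    · rw [abs_le]
      constructor <;> nlinarith [le_abs_self s, neg_abs_le s]
    · rw [abs_le]
      constructor <;> nlinarith [le_abs_self s, neg_abs_le s]
  have hnorm_te : ∀ t : ℝ, ‖t • e‖ = |t| := by
    intro t
    rw [norm_smul, he1, Real.norm_eq_abs, mul_one]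
  -- step 1: |η' t| ≤ C*|s|*|t|
  have hstep1 : ∀ t ∈ Set.uIcc (0:ℝ) s, |η' t| ≤ (C * |s|) * |t| := by
    intro t ht
    have key := Convex.norm_image_sub_le_of_norm_hasDerivWithin_le
      (f := η') (f' := fun t => g2 (b+t•e) - Q) (s := Set.uIcc (0:ℝ) s)
      (fun u hu => ((hder2 u (hmem u hu)).hasDerivWithinAt))
      (fun u hu => by
        have hu' : b + u•e ∈ openDisc := hmem u hu
        have := hlip _ hu' _ hmem0
        rw [Real.norm_eq_abs]
        have heq : (b + u•e) - b = u•e := by abel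
        rw [heq, hnorm_te] at this
        calc |g2 (b+u•e) - Q| ≤ C * |u| := this
          _ ≤ C * |s| := mul_le_mul_of_nonneg_left (habs u hu) hC0)
      (convex_uIcc 0 s) (Set.left_mem_uIcc) ht
    have hη'0 : η' 0 = 0 := by
      simp [hη', hA]
    rw [hη'0, sub_zero, sub_zero, Real.norm_eq_abs, Real.norm_eq_abs] at key
    exact key
  -- step 2
  have hstep2 := Convex.norm_image_sub_le_of_norm_hasDerivWithin_le
    (f := η) (f' := η') (s := Set.uIcc (0:ℝ) s)
    (fun u hu => ((hder1 u (hmem u hu)).hasDerivWithinAt))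
    (fun u hu => by
      rw [Real.norm_eq_abs]
      calc |η' u| ≤ (C * |s|) * |u| := hstep1 u hu
        _ ≤ (C * |s|) * |s| := mul_le_mul_of_nonneg_left (habs u hu) (by positivity))
    (convex_uIcc 0 s) (Set.left_mem_uIcc) (Set.right_mem_uIcc)
  have hη0 : η 0 = 0 := by simp [hη]
  rw [hη0, sub_zero, sub_zero, Real.norm_eq_abs, Real.norm_eq_abs] at hstep2
  calc |f (b + s • e) - f b - s * (fderiv ℝ f b e) - s^2/2 * (fderiv ℝ (fun z => fderiv ℝ f z e) b e)|
      = |η s| := rfl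
    _ ≤ (C * |s|) * |s| * |s| := hstep2
    _ = C * |s|^3 := by ring

end S16
namespace S16

lemma DyDep.mono {α : Type*} {m m' : ℕ} (h : m ≤ m') {W : ℝ → α} (hW : DyDep m W) :
    DyDep m' W :=
  fun x y hxy => hW x y (floor_agree h hxy)

lemma abs_le_of_uIcc {s t : ℝ} (ht : t ∈ Set.uIcc (0:ℝ) s) : |t| ≤ |s| := by
  rcases Set.mem_uIcc.mp ht with ⟨h1, h2⟩ | ⟨h1, h2⟩
  · rw [abs_le]
    constructor <;> nlinarith [le_abs_self s, neg_abs_le s]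
  · rw [abs_le]
    constructor <;> nlinarith [le_abs_self s, neg_abs_le s]

lemma telescope_inner_aux (u : ℕ → ℝ) (a m : ℕ) :
    ∑ j ∈ Finset.Icc 1 m, (u (a+j) - u (a+j-1)) = u (a+m) - u a := by
  induction m with
  | zero =>
    rw [Finset.Icc_eq_empty (by omega)]
    simp
  | succ m ih =>
    rw [Finset.sum_Icc_succ_top (by omega : 1 ≤ m+1), ih]
    have h1 : a + (m+1) - 1 = a + m := by omega
    rw [h1]
    ring

lemma telescope_inner (u : ℕ → ℝ) (N n : ℕ) :
    ∑ j ∈ Finset.Icc 1 N, (u (n*N+j) - u (n*N+j-1)) = u ((n+1)*N) - u (n*N) := by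
  rw [telescope_inner_aux u (n*N) N]
  have h1 : n*N+N = (n+1)*N := by ring
  rw [h1]

lemma telescope (u : ℕ → ℝ) (N K τ0 : ℕ) (hτ : τ0 ≤ K) :
    ∑ n ∈ Finset.range K, (if n+1 ≤ τ0 then (u ((n+1)*N) - u (n*N)) else 0)
      = u (τ0*N) - u 0 := by
  have hfil : Finset.filter (fun n => n+1 ≤ τ0) (Finset.range K) = Finset.range τ0 := by
    ext n
    simp only [Finset.mem_filter, Finset.mem_range]
    omega
  rw [← Finset.sum_filter, hfil]
  have := Finset.sum_range_sub (f := fun n => u (n*N)) τ0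
  simpa using this

lemma Bpt_succ (δ : ℝ) (k : ℕ) (x : ℝ) :
    Bpt δ (k+1) x = Bpt δ k x + (rad (k+1) x * Real.sqrt (2*δ)) •
      (if rad k x = -1 then ((1,0) : ℝ×ℝ) else ((0,1) : ℝ×ℝ)) := by
  have hd : (k+1) - 1 = k := by omega
  unfold Bpt
  rw [B1_succ, B2_succ]
  unfold dB1 dB2
  rw [hd]
  rcases rad_cases k x with h | h
  · rw [h, if_neg (by norm_num : ¬ (1:ℝ) = -1), if_pos rfl, if_neg (by norm_num : ¬ (1:ℝ) = -1)]
    have : ((rad (k+1) x * Real.sqrt (2*δ)) • ((0,1) : ℝ×ℝ)) = (0, rad (k+1) x * Real.sqrt (2*δ)) := by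
      simp [Prod.ext_iff]
    rw [this]
    simp [Prod.ext_iff]
  · rw [h, if_pos rfl, if_neg (by norm_num : ¬ (-1:ℝ) = 1), if_pos rfl]
    have : ((rad (k+1) x * Real.sqrt (2*δ)) • ((1,0) : ℝ×ℝ)) = (rad (k+1) x * Real.sqrt (2*δ), 0) := by
      simp [Prod.ext_iff]
    rw [this]
    simp [Prod.ext_iff]

lemma bound_on_disc {U : Set (ℝ×ℝ)} (hUD : closedDisc ⊆ U) {g : ℝ×ℝ → ℝ}
    (hg : ContinuousOn g U) :
    ∃ C : ℝ, 0 ≤ C ∧ ∀ y ∈ closedDisc, |g y| ≤ C := by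
  obtain ⟨C, hC⟩ := isCompact_closedDisc.exists_bound_of_continuousOn (hg.mono hUD)
  refine ⟨max C 0, le_max_right _ _, fun y hy => ?_⟩
  have := hC y hy
  rw [Real.norm_eq_abs] at this
  exact le_trans this (le_max_left _ _)

end S16
namespace S16

lemma const_spec {U : Set (ℝ×ℝ)} (hU : IsOpen U) (hUD : closedDisc ⊆ U)
    {ψ : ℝ×ℝ → ℝ} (hψ : ContDiffOn ℝ (⊤:ℕ∞) ψ U) :
    ∃ M2 C3 : ℝ, 0 ≤ M2 ∧ 0 ≤ C3 ∧
      (∀ y ∈ openDisc, |pd1 (pd1 ψ) y| ≤ M2) ∧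
      (∀ y ∈ openDisc, |pd2 (pd2 ψ) y| ≤ M2) ∧
      (∀ p ∈ openDisc, ∀ q ∈ openDisc, |pd1 (pd1 ψ) p - pd1 (pd1 ψ) q| ≤ C3 * ‖p - q‖) ∧
      (∀ p ∈ openDisc, ∀ q ∈ openDisc, |pd2 (pd2 ψ) p - pd2 (pd2 ψ) q| ≤ C3 * ‖p - q‖) := by
  have hsub : openDisc ⊆ U := fun p hp => hUD (openDisc_subset_closedDisc hp)
  have h11 : ContDiffOn ℝ (⊤:ℕ∞) (pd1 (pd1 ψ)) U :=
    pd_contDiffOn hU (pd_contDiffOn hU hψ (1,0)) (1,0)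
  have h22 : ContDiffOn ℝ (⊤:ℕ∞) (pd2 (pd2 ψ)) U :=
    pd_contDiffOn hU (pd_contDiffOn hU hψ (0,1)) (0,1)
  obtain ⟨M2a, hM2a0, hM2a⟩ := bound_on_disc hUD h11.continuousOn
  obtain ⟨M2b, hM2b0, hM2b⟩ := bound_on_disc hUD h22.continuousOn
  obtain ⟨Ca1, hCa10, hCa1⟩ := bound_on_disc hUD (pd_contDiffOn hU h11 (1,0)).continuousOn
  obtain ⟨Ca2, hCa20, hCa2⟩ := bound_on_disc hUD (pd_contDiffOn hU h11 (0,1)).continuousOn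
  obtain ⟨Cb1, hCb10, hCb1⟩ := bound_on_disc hUD (pd_contDiffOn hU h22 (1,0)).continuousOn
  obtain ⟨Cb2, hCb20, hCb2⟩ := bound_on_disc hUD (pd_contDiffOn hU h22 (0,1)).continuousOn
  refine ⟨max M2a M2b, (Ca1 + Ca2) + (Cb1 + Cb2), le_trans hM2a0 (le_max_left _ _), by positivity,
    ?_, ?_, ?_, ?_⟩
  · intro y hy
    exact le_trans (hM2a y (openDisc_subset_closedDisc hy)) (le_max_left _ _)
  · intro y hy
    exact le_trans (hM2b y (openDisc_subset_closedDisc hy)) (le_max_right _ _)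
  · intro p hp q hq
    have hlip := lip_openDisc hU hsub (g := pd1 (pd1 ψ)) h11 (C := Ca1 + Ca2) ?_ hp hq
    · refine le_trans hlip ?_
      have : 0 ≤ ‖p - q‖ := norm_nonneg _
      nlinarith [hCb10, hCb20]
    · intro y hy
      refine le_trans (opnorm_le_pd _ y) ?_
      have e1 : |pd1 (pd1 (pd1 ψ)) y| ≤ Ca1 := hCa1 y (openDisc_subset_closedDisc hy)
      have e2 : |pd2 (pd1 (pd1 ψ)) y| ≤ Ca2 := hCa2 y (openDisc_subset_closedDisc hy)
      linarith
  · intro p hp q hq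
    have hlip := lip_openDisc hU hsub (g := pd2 (pd2 ψ)) h22 (C := Cb1 + Cb2) ?_ hp hq
    · refine le_trans hlip ?_
      have : 0 ≤ ‖p - q‖ := norm_nonneg _
      nlinarith [hCa10, hCa20]
    · intro y hy
      refine le_trans (opnorm_le_pd _ y) ?_
      have e1 : |pd1 (pd2 (pd2 ψ)) y| ≤ Cb1 := hCb1 y (openDisc_subset_closedDisc hy)
      have e2 : |pd2 (pd2 (pd2 ψ)) y| ≤ Cb2 := hCb2 y (openDisc_subset_closedDisc hy)
      linarith

lemma step_taylor {U : Set (ℝ×ℝ)} (hU : IsOpen U) (hUD : closedDisc ⊆ U)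
    {ψ : ℝ×ℝ → ℝ} (hψ : ContDiffOn ℝ (⊤:ℕ∞) ψ U)
    {C3 : ℝ} (hC3 : 0 ≤ C3)
    (hlip1 : ∀ p ∈ openDisc, ∀ q ∈ openDisc, |pd1 (pd1 ψ) p - pd1 (pd1 ψ) q| ≤ C3 * ‖p - q‖)
    (hlip2 : ∀ p ∈ openDisc, ∀ q ∈ openDisc, |pd2 (pd2 ψ) p - pd2 (pd2 ψ) q| ≤ C3 * ‖p - q‖)
    {δ : ℝ} (hδ : 0 ≤ δ) (k : ℕ) (x : ℝ)
    (hin : Bnorm δ k x + Real.sqrt (2*δ) < 1) :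
    |ψ (Bpt δ (k+1) x) - ψ (Bpt δ k x)
      - dB1 δ (k+1) x * pd1 ψ (Bpt δ k x) - dB2 δ (k+1) x * pd2 ψ (Bpt δ k x)
      - δ * (if rad k x = -1 then pd1 (pd1 ψ) (Bpt δ k x) else pd2 (pd2 ψ) (Bpt δ k x))|
      ≤ C3 * Real.sqrt (2*δ)^3 := by
  have hsub : openDisc ⊆ U := fun p hp => hUD (openDisc_subset_closedDisc hp)
  have hd : (k+1) - 1 = k := by omega
  set s : ℝ := rad (k+1) x * Real.sqrt (2*δ) with hs
  have habs_s : |s| = Real.sqrt (2*δ) := by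
    rw [hs, abs_mul, abs_rad, one_mul, abs_of_nonneg (Real.sqrt_nonneg _)]
  have hs2 : s^2/2 = δ := by
    have h1 : s^2 = (rad (k+1) x * rad (k+1) x) * (Real.sqrt (2*δ))^2 := by rw [hs]; ring
    rw [h1, rad_sq, Real.sq_sqrt (by linarith), one_mul]
    ring
  have hBn : Bnorm δ k x = Real.sqrt ((B1 δ k x)^2 + (B2 δ k x)^2) := rfl
  have hBn0 : 0 ≤ Bnorm δ k x := Real.sqrt_nonneg _
  rcases rad_cases k x with hr | hr
  · -- coordinate 2 moves
    have hdb1 : dB1 δ (k+1) x = 0 := by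
      unfold dB1
      rw [hd, hr, if_neg (by norm_num : ¬ (1:ℝ) = -1)]
      ring
    have hdb2 : dB2 δ (k+1) x = s := by
      unfold dB2
      rw [hd, hr, if_pos rfl, hs]
      ring
    have hBpt : Bpt δ (k+1) x = Bpt δ k x + s • ((0,1) : ℝ×ℝ) := by
      rw [Bpt_succ, hr, if_neg (by norm_num : ¬ (1:ℝ) = -1), hs]
    have hmem : ∀ t ∈ Set.uIcc (0:ℝ) s, Bpt δ k x + t • ((0,1):ℝ×ℝ) ∈ openDisc := by
      intro t ht
      have h1 : |t| ≤ Real.sqrt (2*δ) := by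
        rw [← habs_s]; exact abs_le_of_uIcc ht
      have h2 : Bpt δ k x + t • ((0,1):ℝ×ℝ) = (B1 δ k x, B2 δ k x + t) := by
        simp [Bpt, Prod.ext_iff]
      rw [h2]
      apply mem_openDisc_of_sqrt
      calc Real.sqrt ((B1 δ k x)^2 + (B2 δ k x + t)^2)
          ≤ Real.sqrt ((B1 δ k x)^2 + (B2 δ k x)^2) + |t| := sqrt_add_two_le _ _ _
        _ < 1 := by rw [← hBn]; linarith
    have key := taylor2 hU hsub hψ ((0,1) : ℝ×ℝ)
      (by rw [Prod.norm_def]; norm_num) hC3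
      (fun p hp q hq => hlip2 p hp q hq) hmem
    have key' : |ψ (Bpt δ k x + s • ((0,1):ℝ×ℝ)) - ψ (Bpt δ k x)
        - s * pd2 ψ (Bpt δ k x) - s^2/2 * pd2 (pd2 ψ) (Bpt δ k x)| ≤ C3 * |s|^3 := key
    rw [hBpt, hdb1, hdb2, hr, if_neg (by norm_num : ¬ (1:ℝ) = -1)]
    have harg : ψ (Bpt δ k x + s • ((0,1):ℝ×ℝ)) - ψ (Bpt δ k x)
        - 0 * pd1 ψ (Bpt δ k x) - s * pd2 ψ (Bpt δ k x) - δ * pd2 (pd2 ψ) (Bpt δ k x)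
        = ψ (Bpt δ k x + s • ((0,1):ℝ×ℝ)) - ψ (Bpt δ k x)
        - s * pd2 ψ (Bpt δ k x) - s^2/2 * pd2 (pd2 ψ) (Bpt δ k x) := by
      rw [hs2]
      ring
    rw [← harg, habs_s] at key'
    exact key'
  · -- coordinate 1 moves
    have hdb2 : dB2 δ (k+1) x = 0 := by
      unfold dB2
      rw [hd, hr, if_neg (by norm_num : ¬ (-1:ℝ) = 1)]
      ring
    have hdb1 : dB1 δ (k+1) x = s := by
      unfold dB1
      rw [hd, hr, if_pos rfl, hs]
      ring
    have hBpt : Bpt δ (k+1) x = Bpt δ k x + s • ((1,0) : ℝ×ℝ) := by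
      rw [Bpt_succ, hr, if_pos rfl, hs]
    have hmem : ∀ t ∈ Set.uIcc (0:ℝ) s, Bpt δ k x + t • ((1,0):ℝ×ℝ) ∈ openDisc := by
      intro t ht
      have h1 : |t| ≤ Real.sqrt (2*δ) := by
        rw [← habs_s]; exact abs_le_of_uIcc ht
      have h2 : Bpt δ k x + t • ((1,0):ℝ×ℝ) = (B1 δ k x + t, B2 δ k x) := by
        simp [Bpt, Prod.ext_iff]
      rw [h2]
      apply mem_openDisc_of_sqrt
      calc Real.sqrt ((B1 δ k x + t)^2 + (B2 δ k x)^2)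
          ≤ Real.sqrt ((B1 δ k x)^2 + (B2 δ k x)^2) + |t| := sqrt_add_one_le _ _ _
        _ < 1 := by rw [← hBn]; linarith
    have key := taylor2 hU hsub hψ ((1,0) : ℝ×ℝ)
      (by rw [Prod.norm_def]; norm_num) hC3
      (fun p hp q hq => hlip1 p hp q hq) hmem
    have key' : |ψ (Bpt δ k x + s • ((1,0):ℝ×ℝ)) - ψ (Bpt δ k x)
        - s * pd1 ψ (Bpt δ k x) - s^2/2 * pd1 (pd1 ψ) (Bpt δ k x)| ≤ C3 * |s|^3 := key
    rw [hBpt, hdb1, hdb2, hr, if_pos rfl]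
    have harg : ψ (Bpt δ k x + s • ((1,0):ℝ×ℝ)) - ψ (Bpt δ k x)
        - s * pd1 ψ (Bpt δ k x) - 0 * pd2 ψ (Bpt δ k x) - δ * pd1 (pd1 ψ) (Bpt δ k x)
        = ψ (Bpt δ k x + s • ((1,0):ℝ×ℝ)) - ψ (Bpt δ k x)
        - s * pd1 ψ (Bpt δ k x) - s^2/2 * pd1 (pd1 ψ) (Bpt δ k x) := by
      rw [hs2]
      ring
    rw [← harg, habs_s] at key'
    exact key'

end S16
namespace S16

lemma DyDep.mul_rad {k : ℕ} {G : ℝ → ℝ} (h : DyDep k G) :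
    DyDep (k+1) (fun x => G x * rad k x) := by
  intro x y hxy
  have h1 : G x = G y := h x y (floor_agree (Nat.le_succ k) hxy)
  have h2 : rad k x = rad k y := by unfold rad; rw [hxy]
  simp only [h1, h2]

lemma step_taylor' {U : Set (ℝ×ℝ)} (hU : IsOpen U) (hUD : closedDisc ⊆ U)
    {ψ : ℝ×ℝ → ℝ} (hψ : ContDiffOn ℝ (⊤:ℕ∞) ψ U)
    {C3 : ℝ} (hC3 : 0 ≤ C3)
    (hlip1 : ∀ p ∈ openDisc, ∀ q ∈ openDisc, |pd1 (pd1 ψ) p - pd1 (pd1 ψ) q| ≤ C3 * ‖p - q‖)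
    (hlip2 : ∀ p ∈ openDisc, ∀ q ∈ openDisc, |pd2 (pd2 ψ) p - pd2 (pd2 ψ) q| ≤ C3 * ‖p - q‖)
    {δ : ℝ} (hδ : 0 ≤ δ) (l : ℕ) (hl : 1 ≤ l) (x : ℝ)
    (hin : Bnorm δ (l-1) x + Real.sqrt (2*δ) < 1) :
    |ψ (Bpt δ l x) - ψ (Bpt δ (l-1) x)
      - dB1 δ l x * pd1 ψ (Bpt δ (l-1) x) - dB2 δ l x * pd2 ψ (Bpt δ (l-1) x)
      - δ * (if rad (l-1) x = -1 then pd1 (pd1 ψ) (Bpt δ (l-1) x) else pd2 (pd2 ψ) (Bpt δ (l-1) x))|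
      ≤ C3 * Real.sqrt (2*δ)^3 := by
  obtain ⟨k, rfl⟩ : ∃ k, l = k+1 := ⟨l-1, by omega⟩
  have hd : k+1-1 = k := by omega
  rw [hd] at hin ⊢
  exact step_taylor hU hUD hψ hC3 hlip1 hlip2 hδ k x hin

lemma Bpt_pred {δ : ℝ} (l : ℕ) (hl : 2 ≤ l) (x : ℝ) :
    Bpt δ (l-1) x = Bpt δ (l-2) x + (rad (l-1) x * Real.sqrt (2*δ)) •
      (if rad (l-2) x = -1 then ((1,0):ℝ×ℝ) else ((0,1):ℝ×ℝ)) := by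
  obtain ⟨k, rfl⟩ : ∃ k, l = k+2 := ⟨l-2, by omega⟩
  have h1 : k+2-1 = k+1 := by omega
  have h2 : k+2-2 = k := by omega
  rw [h1, h2]
  exact Bpt_succ δ k x

set_option maxHeartbeats 2000000 in
lemma main_est {U : Set (ℝ×ℝ)} (hU : IsOpen U) (hUD : closedDisc ⊆ U)
    {ψ : ℝ×ℝ → ℝ} (hψ : ContDiffOn ℝ (⊤:ℕ∞) ψ U)
    (hharm : ∀ y ∈ openDisc, pd1 (pd1 ψ) y + pd2 (pd2 ψ) y = 0)
    {M2 C3 : ℝ} (hM20 : 0 ≤ M2) (hC30 : 0 ≤ C3)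
    (hM2a : ∀ y ∈ openDisc, |pd1 (pd1 ψ) y| ≤ M2)
    (hM2b : ∀ y ∈ openDisc, |pd2 (pd2 ψ) y| ≤ M2)
    (hlip1 : ∀ p ∈ openDisc, ∀ q ∈ openDisc, |pd1 (pd1 ψ) p - pd1 (pd1 ψ) q| ≤ C3 * ‖p - q‖)
    (hlip2 : ∀ p ∈ openDisc, ∀ q ∈ openDisc, |pd2 (pd2 ψ) p - pd2 (pd2 ψ) q| ≤ C3 * ‖p - q‖)
    {T : ℝ} (hT : 0 < T) {N : ℕ} (hN2 : 2 ≤ N) (hNT : 2*T + 1 ≤ (N:ℝ)) :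
    |(∫ x, ψ (Bpt (T/(N:ℝ)^5) (nstop (T/(N:ℝ)^5) (1/(N:ℝ)) N x * N) x) ∂P) - ψ (0,0)|
      ≤ (M2*T + C3*(1+T)) / N := by
  have hsub : openDisc ⊆ U := fun p hp => hUD (openDisc_subset_closedDisc hp)
  set δ : ℝ := T/(N:ℝ)^5 with hδdef
  set ε : ℝ := 1/(N:ℝ) with hεdef
  have hN0 : (0:ℝ) < N := by
    have : (2:ℝ) ≤ N := by exact_mod_cast hN2
    linarith
  have hN1 : (1:ℝ) ≤ N := by linarith
  have hδ0 : 0 < δ := by rw [hδdef]; positivity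
  have hε0 : 0 < ε := by rw [hεdef]; positivity
  have hε2 : ε ≤ 1/2 := by
    rw [hεdef, div_le_div_iff₀ hN0 (by norm_num)]
    have : (2:ℝ) ≤ N := by exact_mod_cast hN2
    linarith
  have hsd0 : 0 ≤ Real.sqrt (2*δ) := Real.sqrt_nonneg _
  have hsd_lt : Real.sqrt (2*δ) < 1/(N:ℝ)^2 := by
    rw [show (Real.sqrt (2*δ) < 1/(N:ℝ)^2) ↔ (2*δ < (1/(N:ℝ)^2)^2) from Real.sqrt_lt' (by positivity)]
    rw [hδdef, div_pow, one_pow]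
    rw [show (2:ℝ)*(T/(N:ℝ)^5) = 2*T/(N:ℝ)^5 from by ring]
    rw [div_lt_div_iff₀ (by positivity) (by positivity)]
    have he : ((N:ℝ)^2)^2*(N:ℝ) = (N:ℝ)^5 := by ring
    nlinarith [pow_pos hN0 4, pow_pos hN0 5, hNT, hT, pow_pos hN0 2]
  have hsd_le : Real.sqrt (2*δ) ≤ 1/(N:ℝ)^2 := le_of_lt hsd_lt
  have hNsd : (N:ℝ) * Real.sqrt (2*δ) < ε := by
    have h1 : (N:ℝ) * Real.sqrt (2*δ) < (N:ℝ) * (1/(N:ℝ)^2) :=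
      mul_lt_mul_of_pos_left hsd_lt hN0
    have h2 : (N:ℝ) * (1/(N:ℝ)^2) = ε := by
      rw [hεdef]
      field_simp
    linarith
  -- walk position bounds
  have hbase : ∀ x : ℝ, ∀ n : ℕ, n+1 ≤ N^4 → n+1 ≤ nstop δ ε N x →
      Bnorm δ (n*N) x ≤ 1 - ε := by
    intro x n hn hc
    rcases Nat.eq_zero_or_pos n with rfl | hpos
    · rw [zero_mul, Bnorm_zero]
      linarith
    · exact (le_nstop_iff hn).mp hc n hpos (le_refl n)
  have hwalk : ∀ x : ℝ, ∀ n : ℕ, n+1 ≤ N^4 → n+1 ≤ nstop δ ε N x → ∀ jj : ℕ,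
      Bnorm δ (n*N+jj) x ≤ 1 - ε + (jj:ℝ) * Real.sqrt (2*δ) := by
    intro x n hn hc jj
    have h2 := Bnorm_le_of_le (le_of_lt hδ0) x (Nat.le_add_right (n*N) jj)
    have h3 := hbase x n hn hc
    have hcast : ((n*N+jj:ℕ):ℝ) - ((n*N:ℕ):ℝ) = (jj:ℝ) := by push_cast; ring
    rw [hcast] at h2
    linarith
  have hin : ∀ x : ℝ, ∀ n : ℕ, n+1 ≤ N^4 → n+1 ≤ nstop δ ε N x → ∀ jj : ℕ, jj + 1 ≤ N →
      Bnorm δ (n*N+jj) x + Real.sqrt (2*δ) < 1 := by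
    intro x n hn hc jj hjj
    have h1 := hwalk x n hn hc jj
    have h2 : ((jj:ℝ)+1) * Real.sqrt (2*δ) ≤ (N:ℝ) * Real.sqrt (2*δ) := by
      apply mul_le_mul_of_nonneg_right _ hsd0
      have : (jj:ℝ)+1 ≤ (N:ℝ) := by exact_mod_cast hjj
      linarith
    nlinarith [hNsd]
  -- the indicator
  set χ : ℕ → ℝ → ℝ := fun n x => if n+1 ≤ nstop δ ε N x then (1:ℝ) else 0 with hχdef
  have hχagree : ∀ n : ℕ, n+1 ≤ N^4 → ∀ x y : ℝ, Agree (n*N+1) x y → χ n x = χ n y := by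
    intro n hn x y hag
    have hiff := chi_congr (δ := δ) (ε := ε) hn hag
    simp only [hχdef]
    by_cases hc : n+1 ≤ nstop δ ε N x
    · rw [if_pos hc, if_pos (hiff.mp hc)]
    · rw [if_neg hc, if_neg (fun h => hc (hiff.mpr h))]
  -- pointwise telescoping identity
  have hpoint : ∀ x : ℝ, ψ (Bpt δ (nstop δ ε N x * N) x) - ψ (0,0)
      = ∑ n ∈ Finset.range (N^4), ∑ j ∈ Finset.Icc 1 N,
          χ n x * (ψ (Bpt δ (n*N+j) x) - ψ (Bpt δ (n*N+j-1) x)) := by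
    intro x
    have h1 := telescope (fun k => ψ (Bpt δ k x)) N (N^4) (nstop δ ε N x) (nstop_le δ ε N x)
    beta_reduce at h1
    have h0 : ψ (Bpt δ 0 x) = ψ (0,0) := by rw [Bpt_zero]
    rw [h0] at h1
    rw [← h1]
    apply Finset.sum_congr rfl
    intro n _
    have h2 : ∑ j ∈ Finset.Icc 1 N, χ n x * (ψ (Bpt δ (n*N+j) x) - ψ (Bpt δ (n*N+j-1) x))
        = χ n x * ∑ j ∈ Finset.Icc 1 N, (ψ (Bpt δ (n*N+j) x) - ψ (Bpt δ (n*N+j-1) x)) := by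
      rw [Finset.mul_sum]
    have h3 := telescope_inner (fun k => ψ (Bpt δ k x)) N n
    beta_reduce at h3
    rw [h2, h3]
    simp only [hχdef]
    split <;> simp
  -- integrability of the full integrand
  have hintf : Integrable (fun x => ψ (Bpt δ (nstop δ ε N x * N) x)) P := by
    apply DyDep.integrable (m := N^4*N+1)
    apply DyDep.of_agree
    intro x y hag
    have e0 : nstop δ ε N x = nstop δ ε N y := nstop_congr hag
    have e1 : Bpt δ (nstop δ ε N y * N) x = Bpt δ (nstop δ ε N y * N) y := by
      apply Bpt_congr _ hag
      have h5 := nstop_le δ ε N y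
      have h6 := Nat.mul_le_mul_right N h5
      omega
    rw [e0, e1]
  have hTDy : ∀ n : ℕ, n+1 ≤ N^4 → ∀ j : ℕ, 1 ≤ j → j ≤ N →
      DyDep (n*N+j+1) (fun x => χ n x * (ψ (Bpt δ (n*N+j) x) - ψ (Bpt δ (n*N+j-1) x))) := by
    intro n hn j hj1 _
    apply DyDep.of_agree
    intro x y hag
    have e1 : χ n x = χ n y := hχagree n hn x y (hag.mono (by omega))
    have e2 : Bpt δ (n*N+j) x = Bpt δ (n*N+j) y := Bpt_congr (by omega) hag
    have e3 : Bpt δ (n*N+j-1) x = Bpt δ (n*N+j-1) y := Bpt_congr (by omega) hag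
    simp only [e1, e2, e3]
  have hTint : ∀ n ∈ Finset.range (N^4), ∀ j ∈ Finset.Icc 1 N,
      Integrable (fun x => χ n x * (ψ (Bpt δ (n*N+j) x) - ψ (Bpt δ (n*N+j-1) x))) P := by
    intro n hn j hj
    rw [Finset.mem_range] at hn
    rw [Finset.mem_Icc] at hj
    exact (hTDy n (by omega) j hj.1 hj.2).integrable
  -- swap integral and sums
  have hswap : (∫ x, ψ (Bpt δ (nstop δ ε N x * N) x) ∂P) - ψ (0,0)
      = ∑ n ∈ Finset.range (N^4), ∑ j ∈ Finset.Icc 1 N,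
          ∫ x, χ n x * (ψ (Bpt δ (n*N+j) x) - ψ (Bpt δ (n*N+j-1) x)) ∂P := by
    have hconst : ∫ x, (ψ (Bpt δ (nstop δ ε N x * N) x) - ψ (0,0)) ∂P
        = (∫ x, ψ (Bpt δ (nstop δ ε N x * N) x) ∂P) - ψ (0,0) := by
      rw [integral_sub hintf (integrable_const _), integral_const]
      simp
    rw [← hconst]
    rw [integral_congr_ae (Filter.Eventually.of_forall hpoint)]
    rw [integral_finset_sum _ (fun n hn => integrable_finset_sum _ (fun j hj => hTint n hn j hj))]
    apply Finset.sum_congr rfl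
    intro n hn
    rw [integral_finset_sum _ (fun j hj => hTint n hn j hj)]
  -- per-term estimate
  have hterm : ∀ n : ℕ, n+1 ≤ N^4 → ∀ j : ℕ, 1 ≤ j → j ≤ N →
      |∫ x, χ n x * (ψ (Bpt δ (n*N+j) x) - ψ (Bpt δ (n*N+j-1) x)) ∂P|
        ≤ C3 * Real.sqrt (2*δ)^3 + δ*(C3*Real.sqrt (2*δ)) + (if j = 1 then δ*M2 else 0) := by
    intro n hn j hj1 hjN
    have hl1 : 1 ≤ n*N+j := by omega
    have hdecomp : ∀ x, χ n x * (ψ (Bpt δ (n*N+j) x) - ψ (Bpt δ (n*N+j-1) x))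
        = (χ n x * ((if rad (n*N+j-1) x = -1 then (1:ℝ) else 0) * Real.sqrt (2*δ)
              * pd1 ψ (Bpt δ (n*N+j-1) x))) * rad (n*N+j) x
          + (χ n x * ((if rad (n*N+j-1) x = 1 then (1:ℝ) else 0) * Real.sqrt (2*δ)
              * pd2 ψ (Bpt δ (n*N+j-1) x))) * rad (n*N+j) x
          + δ * (χ n x * (if rad (n*N+j-1) x = -1 then pd1 (pd1 ψ) (Bpt δ (n*N+j-1) x)
              else pd2 (pd2 ψ) (Bpt δ (n*N+j-1) x)))
          + χ n x * (ψ (Bpt δ (n*N+j) x) - ψ (Bpt δ (n*N+j-1) x)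
              - dB1 δ (n*N+j) x * pd1 ψ (Bpt δ (n*N+j-1) x)
              - dB2 δ (n*N+j) x * pd2 ψ (Bpt δ (n*N+j-1) x)
              - δ * (if rad (n*N+j-1) x = -1 then pd1 (pd1 ψ) (Bpt δ (n*N+j-1) x)
                  else pd2 (pd2 ψ) (Bpt δ (n*N+j-1) x))) := by
      intro x
      unfold dB1 dB2
      ring
    have hGaDy : DyDep (n*N+j) (fun x => χ n x * ((if rad (n*N+j-1) x = -1 then (1:ℝ) else 0)
        * Real.sqrt (2*δ) * pd1 ψ (Bpt δ (n*N+j-1) x))) := by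
      apply DyDep.of_agree
      intro x y hag
      have e1 : χ n x = χ n y := hχagree n hn x y (hag.mono (by omega))
      have e2 : rad (n*N+j-1) x = rad (n*N+j-1) y := rad_congr (by omega) hag
      have e3 : Bpt δ (n*N+j-1) x = Bpt δ (n*N+j-1) y := Bpt_congr (by omega) hag
      simp only [e1, e2, e3]
    have hGbDy : DyDep (n*N+j) (fun x => χ n x * ((if rad (n*N+j-1) x = 1 then (1:ℝ) else 0)
        * Real.sqrt (2*δ) * pd2 ψ (Bpt δ (n*N+j-1) x))) := by
      apply DyDep.of_agree
      intro x y hag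
      have e1 : χ n x = χ n y := hχagree n hn x y (hag.mono (by omega))
      have e2 : rad (n*N+j-1) x = rad (n*N+j-1) y := rad_congr (by omega) hag
      have e3 : Bpt δ (n*N+j-1) x = Bpt δ (n*N+j-1) y := Bpt_congr (by omega) hag
      simp only [e1, e2, e3]
    have hHDy : DyDep (n*N+j) (fun x => χ n x * (if rad (n*N+j-1) x = -1
        then pd1 (pd1 ψ) (Bpt δ (n*N+j-1) x) else pd2 (pd2 ψ) (Bpt δ (n*N+j-1) x))) := by
      apply DyDep.of_agree
      intro x y hag
      have e1 : χ n x = χ n y := hχagree n hn x y (hag.mono (by omega))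
      have e2 : rad (n*N+j-1) x = rad (n*N+j-1) y := rad_congr (by omega) hag
      have e3 : Bpt δ (n*N+j-1) x = Bpt δ (n*N+j-1) y := Bpt_congr (by omega) hag
      simp only [e1, e2, e3]
    have hRDy : DyDep (n*N+j+1) (fun x => χ n x * (ψ (Bpt δ (n*N+j) x) - ψ (Bpt δ (n*N+j-1) x)
        - dB1 δ (n*N+j) x * pd1 ψ (Bpt δ (n*N+j-1) x)
        - dB2 δ (n*N+j) x * pd2 ψ (Bpt δ (n*N+j-1) x)
        - δ * (if rad (n*N+j-1) x = -1 then pd1 (pd1 ψ) (Bpt δ (n*N+j-1) x)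
            else pd2 (pd2 ψ) (Bpt δ (n*N+j-1) x)))) := by
      apply DyDep.of_agree
      intro x y hag
      have e1 : χ n x = χ n y := hχagree n hn x y (hag.mono (by omega))
      have e2 : rad (n*N+j-1) x = rad (n*N+j-1) y := rad_congr (by omega) hag
      have e3 : Bpt δ (n*N+j-1) x = Bpt δ (n*N+j-1) y := Bpt_congr (by omega) hag
      have e4 : Bpt δ (n*N+j) x = Bpt δ (n*N+j) y := Bpt_congr (by omega) hag
      have e5 : dB1 δ (n*N+j) x = dB1 δ (n*N+j) y := dB1_congr (by omega) hag
      have e6 : dB2 δ (n*N+j) x = dB2 δ (n*N+j) y := dB2_congr (by omega) hag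
      simp only [e1, e2, e3, e4, e5, e6]
    have ia : Integrable (fun x => (χ n x * ((if rad (n*N+j-1) x = -1 then (1:ℝ) else 0) * Real.sqrt (2*δ)
              * pd1 ψ (Bpt δ (n*N+j-1) x))) * rad (n*N+j) x) P := (hGaDy.mul_rad).integrable
    have ib : Integrable (fun x => (χ n x * ((if rad (n*N+j-1) x = 1 then (1:ℝ) else 0) * Real.sqrt (2*δ)
              * pd2 ψ (Bpt δ (n*N+j-1) x))) * rad (n*N+j) x) P := (hGbDy.mul_rad).integrable
    have icH := hHDy.integrable
    have ic : Integrable (fun x => δ * (χ n x * (if rad (n*N+j-1) x = -1 then pd1 (pd1 ψ) (Bpt δ (n*N+j-1) x)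
              else pd2 (pd2 ψ) (Bpt δ (n*N+j-1) x)))) P := icH.const_mul δ
    have idR : Integrable (fun x => χ n x * (ψ (Bpt δ (n*N+j) x) - ψ (Bpt δ (n*N+j-1) x)
              - dB1 δ (n*N+j) x * pd1 ψ (Bpt δ (n*N+j-1) x)
              - dB2 δ (n*N+j) x * pd2 ψ (Bpt δ (n*N+j-1) x)
              - δ * (if rad (n*N+j-1) x = -1 then pd1 (pd1 ψ) (Bpt δ (n*N+j-1) x)
                  else pd2 (pd2 ψ) (Bpt δ (n*N+j-1) x)))) P := hRDy.integrable
    have iab : Integrable (fun x => (χ n x * ((if rad (n*N+j-1) x = -1 then (1:ℝ) else 0) * Real.sqrt (2*δ)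
              * pd1 ψ (Bpt δ (n*N+j-1) x))) * rad (n*N+j) x
          + (χ n x * ((if rad (n*N+j-1) x = 1 then (1:ℝ) else 0) * Real.sqrt (2*δ)
              * pd2 ψ (Bpt δ (n*N+j-1) x))) * rad (n*N+j) x) P := ia.add ib
    have iabc : Integrable (fun x => (χ n x * ((if rad (n*N+j-1) x = -1 then (1:ℝ) else 0) * Real.sqrt (2*δ)
              * pd1 ψ (Bpt δ (n*N+j-1) x))) * rad (n*N+j) x
          + (χ n x * ((if rad (n*N+j-1) x = 1 then (1:ℝ) else 0) * Real.sqrt (2*δ)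
              * pd2 ψ (Bpt δ (n*N+j-1) x))) * rad (n*N+j) x
          + δ * (χ n x * (if rad (n*N+j-1) x = -1 then pd1 (pd1 ψ) (Bpt δ (n*N+j-1) x)
              else pd2 (pd2 ψ) (Bpt δ (n*N+j-1) x)))) P := iab.add ic
    have hsplit : ∫ x, χ n x * (ψ (Bpt δ (n*N+j) x) - ψ (Bpt δ (n*N+j-1) x)) ∂P
        = (∫ x, (χ n x * ((if rad (n*N+j-1) x = -1 then (1:ℝ) else 0) * Real.sqrt (2*δ)
              * pd1 ψ (Bpt δ (n*N+j-1) x))) * rad (n*N+j) x ∂P)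
          + (∫ x, (χ n x * ((if rad (n*N+j-1) x = 1 then (1:ℝ) else 0) * Real.sqrt (2*δ)
              * pd2 ψ (Bpt δ (n*N+j-1) x))) * rad (n*N+j) x ∂P)
          + δ * (∫ x, χ n x * (if rad (n*N+j-1) x = -1 then pd1 (pd1 ψ) (Bpt δ (n*N+j-1) x)
              else pd2 (pd2 ψ) (Bpt δ (n*N+j-1) x)) ∂P)
          + ∫ x, χ n x * (ψ (Bpt δ (n*N+j) x) - ψ (Bpt δ (n*N+j-1) x)
              - dB1 δ (n*N+j) x * pd1 ψ (Bpt δ (n*N+j-1) x)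
              - dB2 δ (n*N+j) x * pd2 ψ (Bpt δ (n*N+j-1) x)
              - δ * (if rad (n*N+j-1) x = -1 then pd1 (pd1 ψ) (Bpt δ (n*N+j-1) x)
                  else pd2 (pd2 ψ) (Bpt δ (n*N+j-1) x))) ∂P := by
      rw [integral_congr_ae (Filter.Eventually.of_forall hdecomp)]
      rw [integral_add iabc idR, integral_add iab ic, integral_add ia ib]
      rw [integral_const_mul]
    rw [hsplit, integral_mul_rad hGaDy, integral_mul_rad hGbDy]
    -- remainder bound
    have hIR : |∫ x, χ n x * (ψ (Bpt δ (n*N+j) x) - ψ (Bpt δ (n*N+j-1) x)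
        - dB1 δ (n*N+j) x * pd1 ψ (Bpt δ (n*N+j-1) x)
        - dB2 δ (n*N+j) x * pd2 ψ (Bpt δ (n*N+j-1) x)
        - δ * (if rad (n*N+j-1) x = -1 then pd1 (pd1 ψ) (Bpt δ (n*N+j-1) x)
            else pd2 (pd2 ψ) (Bpt δ (n*N+j-1) x))) ∂P| ≤ C3 * Real.sqrt (2*δ)^3 := by
      apply integral_abs_le idR
      intro x
      by_cases hc : n+1 ≤ nstop δ ε N x
      · have hχ1 : χ n x = 1 := by simp only [hχdef]; exact if_pos hc
        rw [hχ1, one_mul]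
        have hb := hin x n hn hc (j-1) (by omega)
        have hidx : n*N+(j-1) = n*N+j-1 := by omega
        rw [hidx] at hb
        exact step_taylor' hU hUD hψ hC30 hlip1 hlip2 (le_of_lt hδ0) (n*N+j) hl1 x hb
      · have hχ0 : χ n x = 0 := by simp only [hχdef]; exact if_neg hc
        rw [hχ0, zero_mul, abs_zero]
        positivity
    -- second-order term bound
    have hIH : |∫ x, χ n x * (if rad (n*N+j-1) x = -1 then pd1 (pd1 ψ) (Bpt δ (n*N+j-1) x)
        else pd2 (pd2 ψ) (Bpt δ (n*N+j-1) x)) ∂P|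
          ≤ (if j = 1 then M2 else C3 * Real.sqrt (2*δ)) := by
      rcases eq_or_lt_of_le hj1 with hj1' | hj2
      · -- j = 1
        rw [if_pos hj1'.symm]
        apply integral_abs_le icH
        intro x
        by_cases hc : n+1 ≤ nstop δ ε N x
        · have hχ1 : χ n x = 1 := by simp only [hχdef]; exact if_pos hc
          rw [hχ1, one_mul]
          have hb := hin x n hn hc (j-1) (by omega)
          have hidx : n*N+(j-1) = n*N+j-1 := by omega
          rw [hidx] at hb
          have hmem : Bpt δ (n*N+j-1) x ∈ openDisc := by
            apply mem_openDisc_of_sqrt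
            show Real.sqrt ((B1 δ (n*N+j-1) x)^2 + (B2 δ (n*N+j-1) x)^2) < 1
            have : Bnorm δ (n*N+j-1) x < 1 := by linarith
            exact this
          split_ifs
          · exact hM2a _ hmem
          · exact hM2b _ hmem
        · have hχ0 : χ n x = 0 := by simp only [hχdef]; exact if_neg hc
          rw [hχ0, zero_mul, abs_zero]
          exact hM20
      · -- 2 ≤ j : pairing over the sign at generation n*N+j-1
        rw [if_neg (by omega)]
        have hj2' : 2 ≤ j := hj2
        have hG1Dy : DyDep (n*N+j-1) (fun x => χ n x * pd1 (pd1 ψ) (Bpt δ (n*N+j-2) x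
            + (-(Real.sqrt (2*δ))) • (if rad (n*N+j-2) x = -1 then ((1,0):ℝ×ℝ) else ((0,1):ℝ×ℝ)))) := by
          apply DyDep.of_agree
          intro x y hag
          have e1 : χ n x = χ n y := hχagree n hn x y (hag.mono (by omega))
          have e2 : rad (n*N+j-2) x = rad (n*N+j-2) y := rad_congr (by omega) hag
          have e3 : Bpt δ (n*N+j-2) x = Bpt δ (n*N+j-2) y := Bpt_congr (by omega) hag
          simp only [e1, e2, e3]
        have hG2Dy : DyDep (n*N+j-1) (fun x => χ n x * pd2 (pd2 ψ) (Bpt δ (n*N+j-2) x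
            + (Real.sqrt (2*δ)) • (if rad (n*N+j-2) x = -1 then ((1,0):ℝ×ℝ) else ((0,1):ℝ×ℝ)))) := by
          apply DyDep.of_agree
          intro x y hag
          have e1 : χ n x = χ n y := hχagree n hn x y (hag.mono (by omega))
          have e2 : rad (n*N+j-2) x = rad (n*N+j-2) y := rad_congr (by omega) hag
          have e3 : Bpt δ (n*N+j-2) x = Bpt δ (n*N+j-2) y := Bpt_congr (by omega) hag
          simp only [e1, e2, e3]
        have hident : ∀ x, χ n x * (if rad (n*N+j-1) x = -1 then pd1 (pd1 ψ) (Bpt δ (n*N+j-1) x)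
            else pd2 (pd2 ψ) (Bpt δ (n*N+j-1) x))
            = (if rad (n*N+j-1) x = -1 then (1:ℝ) else 0) * (χ n x * pd1 (pd1 ψ) (Bpt δ (n*N+j-2) x
                + (-(Real.sqrt (2*δ))) • (if rad (n*N+j-2) x = -1 then ((1,0):ℝ×ℝ) else ((0,1):ℝ×ℝ))))
              + (if rad (n*N+j-1) x = 1 then (1:ℝ) else 0) * (χ n x * pd2 (pd2 ψ) (Bpt δ (n*N+j-2) x
                + (Real.sqrt (2*δ)) • (if rad (n*N+j-2) x = -1 then ((1,0):ℝ×ℝ) else ((0,1):ℝ×ℝ)))) := by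
          intro x
          have hBp := Bpt_pred (δ := δ) (n*N+j) (by omega) x
          rcases rad_cases (n*N+j-1) x with h | h
          · rw [h] at hBp ⊢
            rw [if_neg (by norm_num : ¬(1:ℝ) = -1), if_neg (by norm_num : ¬(1:ℝ) = -1), if_pos rfl]
            rw [hBp, one_mul]
            ring
          · rw [h] at hBp ⊢
            rw [if_pos rfl, if_pos rfl, if_neg (by norm_num : ¬(-1:ℝ) = 1)]
            rw [hBp, neg_one_mul]
            ring
        rw [integral_congr_ae (Filter.Eventually.of_forall hident)]
        rw [integral_pair hG1Dy hG2Dy]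
        rw [← integral_add hG1Dy.integrable hG2Dy.integrable]
        rw [abs_div, abs_two]
        have hpw : ∀ x, |χ n x * pd1 (pd1 ψ) (Bpt δ (n*N+j-2) x
            + (-(Real.sqrt (2*δ))) • (if rad (n*N+j-2) x = -1 then ((1,0):ℝ×ℝ) else ((0,1):ℝ×ℝ)))
            + χ n x * pd2 (pd2 ψ) (Bpt δ (n*N+j-2) x
            + (Real.sqrt (2*δ)) • (if rad (n*N+j-2) x = -1 then ((1,0):ℝ×ℝ) else ((0,1):ℝ×ℝ)))|
              ≤ 2*(C3*Real.sqrt (2*δ)) := by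
          intro x
          by_cases hc : n+1 ≤ nstop δ ε N x
          · have hχ1 : χ n x = 1 := by simp only [hχdef]; exact if_pos hc
            rw [hχ1, one_mul, one_mul]
            have hb := hin x n hn hc (j-2) (by omega)
            have hidx : n*N+(j-2) = n*N+j-2 := by omega
            rw [hidx] at hb
            have habs_neg : |(-(Real.sqrt (2*δ)))| = Real.sqrt (2*δ) := by
              rw [abs_neg, abs_of_nonneg hsd0]
            have habs_pos : |Real.sqrt (2*δ)| = Real.sqrt (2*δ) := abs_of_nonneg hsd0
            -- memberships
            have hmm : ∀ t : ℝ, |t| ≤ Real.sqrt (2*δ) → (Bpt δ (n*N+j-2) x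
                + t • (if rad (n*N+j-2) x = -1 then ((1,0):ℝ×ℝ) else ((0,1):ℝ×ℝ))) ∈ openDisc := by
              intro t ht
              rcases rad_cases (n*N+j-2) x with hev | hev
              · rw [hev, if_neg (by norm_num : ¬(1:ℝ) = -1)]
                have h2 : Bpt δ (n*N+j-2) x + t • ((0,1):ℝ×ℝ)
                    = (B1 δ (n*N+j-2) x, B2 δ (n*N+j-2) x + t) := by
                  simp [Bpt, Prod.ext_iff]
                rw [h2]
                apply mem_openDisc_of_sqrt
                calc Real.sqrt ((B1 δ (n*N+j-2) x)^2 + (B2 δ (n*N+j-2) x + t)^2)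
                    ≤ Real.sqrt ((B1 δ (n*N+j-2) x)^2 + (B2 δ (n*N+j-2) x)^2) + |t| :=
                      sqrt_add_two_le _ _ _
                  _ < 1 := by
                      have : Real.sqrt ((B1 δ (n*N+j-2) x)^2 + (B2 δ (n*N+j-2) x)^2)
                          = Bnorm δ (n*N+j-2) x := rfl
                      rw [this]
                      linarith
              · rw [hev, if_pos rfl]
                have h2 : Bpt δ (n*N+j-2) x + t • ((1,0):ℝ×ℝ)
                    = (B1 δ (n*N+j-2) x + t, B2 δ (n*N+j-2) x) := by
                  simp [Bpt, Prod.ext_iff]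
                rw [h2]
                apply mem_openDisc_of_sqrt
                calc Real.sqrt ((B1 δ (n*N+j-2) x + t)^2 + (B2 δ (n*N+j-2) x)^2)
                    ≤ Real.sqrt ((B1 δ (n*N+j-2) x)^2 + (B2 δ (n*N+j-2) x)^2) + |t| :=
                      sqrt_add_one_le _ _ _
                  _ < 1 := by
                      have : Real.sqrt ((B1 δ (n*N+j-2) x)^2 + (B2 δ (n*N+j-2) x)^2)
                          = Bnorm δ (n*N+j-2) x := rfl
                      rw [this]
                      linarith
            have hmemm := hmm (-(Real.sqrt (2*δ))) (le_of_eq habs_neg)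
            have hmemp := hmm (Real.sqrt (2*δ)) (le_of_eq habs_pos)
            have hharm' := hharm _ hmemm
            have he1 : pd1 (pd1 ψ) (Bpt δ (n*N+j-2) x
                + (-(Real.sqrt (2*δ))) • (if rad (n*N+j-2) x = -1 then ((1,0):ℝ×ℝ) else ((0,1):ℝ×ℝ)))
                = - pd2 (pd2 ψ) (Bpt δ (n*N+j-2) x
                + (-(Real.sqrt (2*δ))) • (if rad (n*N+j-2) x = -1 then ((1,0):ℝ×ℝ) else ((0,1):ℝ×ℝ))) := by
              linarith [hharm']
            rw [he1, neg_add_eq_sub]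
            have hdiff : (Bpt δ (n*N+j-2) x
                + (Real.sqrt (2*δ)) • (if rad (n*N+j-2) x = -1 then ((1,0):ℝ×ℝ) else ((0,1):ℝ×ℝ)))
                - (Bpt δ (n*N+j-2) x
                + (-(Real.sqrt (2*δ))) • (if rad (n*N+j-2) x = -1 then ((1,0):ℝ×ℝ) else ((0,1):ℝ×ℝ)))
                = (2*Real.sqrt (2*δ)) • (if rad (n*N+j-2) x = -1 then ((1,0):ℝ×ℝ) else ((0,1):ℝ×ℝ)) := by
              rw [add_sub_add_left_eq_sub, ← sub_smul]
              congr 1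
              ring
            have hnorm : ‖(2*Real.sqrt (2*δ)) • (if rad (n*N+j-2) x = -1 then ((1,0):ℝ×ℝ)
                else ((0,1):ℝ×ℝ))‖ = 2*Real.sqrt (2*δ) := by
              rw [norm_smul, Real.norm_eq_abs, abs_of_nonneg (by positivity)]
              split_ifs <;> rw [Prod.norm_def] <;> norm_num
            calc |pd2 (pd2 ψ) (Bpt δ (n*N+j-2) x + (Real.sqrt (2*δ)) • _)
                - pd2 (pd2 ψ) (Bpt δ (n*N+j-2) x + (-(Real.sqrt (2*δ))) • _)|
                ≤ C3 * ‖(Bpt δ (n*N+j-2) x + (Real.sqrt (2*δ)) • _)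
                  - (Bpt δ (n*N+j-2) x + (-(Real.sqrt (2*δ))) • _)‖ := hlip2 _ hmemp _ hmemm
              _ = C3 * (2*Real.sqrt (2*δ)) := by rw [hdiff, hnorm]
              _ = 2*(C3*Real.sqrt (2*δ)) := by ring
          · have hχ0 : χ n x = 0 := by simp only [hχdef]; exact if_neg hc
            rw [hχ0, zero_mul, zero_mul, add_zero, abs_zero]
            positivity
        have hS := integral_abs_le (hG1Dy.integrable.add hG2Dy.integrable) hpw
        rw [div_le_iff₀ (by norm_num : (0:ℝ) < 2)]
        calc |∫ x, (χ n x * pd1 (pd1 ψ) _ + χ n x * pd2 (pd2 ψ) _) ∂P|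
            ≤ 2*(C3*Real.sqrt (2*δ)) := hS
          _ = C3 * Real.sqrt (2*δ) * 2 := by ring
    -- combine
    calc |0 + 0 + δ * (∫ x, χ n x * (if rad (n*N+j-1) x = -1 then pd1 (pd1 ψ) (Bpt δ (n*N+j-1) x)
            else pd2 (pd2 ψ) (Bpt δ (n*N+j-1) x)) ∂P)
          + ∫ x, χ n x * (ψ (Bpt δ (n*N+j) x) - ψ (Bpt δ (n*N+j-1) x)
              - dB1 δ (n*N+j) x * pd1 ψ (Bpt δ (n*N+j-1) x)
              - dB2 δ (n*N+j) x * pd2 ψ (Bpt δ (n*N+j-1) x)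
              - δ * (if rad (n*N+j-1) x = -1 then pd1 (pd1 ψ) (Bpt δ (n*N+j-1) x)
                  else pd2 (pd2 ψ) (Bpt δ (n*N+j-1) x))) ∂P|
        ≤ δ * |∫ x, χ n x * (if rad (n*N+j-1) x = -1 then pd1 (pd1 ψ) (Bpt δ (n*N+j-1) x)
            else pd2 (pd2 ψ) (Bpt δ (n*N+j-1) x)) ∂P|
          + |∫ x, χ n x * (ψ (Bpt δ (n*N+j) x) - ψ (Bpt δ (n*N+j-1) x)
              - dB1 δ (n*N+j) x * pd1 ψ (Bpt δ (n*N+j-1) x)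
              - dB2 δ (n*N+j) x * pd2 ψ (Bpt δ (n*N+j-1) x)
              - δ * (if rad (n*N+j-1) x = -1 then pd1 (pd1 ψ) (Bpt δ (n*N+j-1) x)
                  else pd2 (pd2 ψ) (Bpt δ (n*N+j-1) x))) ∂P| := by
          rw [zero_add, zero_add]
          refine le_trans (abs_add_le _ _) ?_
          rw [abs_mul, abs_of_pos hδ0]
      _ ≤ δ * (if j = 1 then M2 else C3 * Real.sqrt (2*δ)) + C3 * Real.sqrt (2*δ)^3 :=
          add_le_add (mul_le_mul_of_nonneg_left hIH (le_of_lt hδ0)) hIR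
      _ ≤ C3 * Real.sqrt (2*δ)^3 + δ*(C3*Real.sqrt (2*δ)) + (if j = 1 then δ*M2 else 0) := by
          split_ifs <;> nlinarith [mul_nonneg hC30 hsd0, le_of_lt hδ0]
  -- sum everything
  rw [hswap]
  have htot : |∑ n ∈ Finset.range (N^4), ∑ j ∈ Finset.Icc 1 N,
      ∫ x, χ n x * (ψ (Bpt δ (n*N+j) x) - ψ (Bpt δ (n*N+j-1) x)) ∂P|
      ≤ ((N^4:ℕ):ℝ) * ((N:ℝ)*(C3 * Real.sqrt (2*δ)^3 + δ*(C3*Real.sqrt (2*δ))) + δ*M2) := by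
    calc |∑ n ∈ Finset.range (N^4), ∑ j ∈ Finset.Icc 1 N,
        ∫ x, χ n x * (ψ (Bpt δ (n*N+j) x) - ψ (Bpt δ (n*N+j-1) x)) ∂P|
        ≤ ∑ n ∈ Finset.range (N^4), |∑ j ∈ Finset.Icc 1 N,
            ∫ x, χ n x * (ψ (Bpt δ (n*N+j) x) - ψ (Bpt δ (n*N+j-1) x)) ∂P| :=
          Finset.abs_sum_le_sum_abs _ _
      _ ≤ ∑ n ∈ Finset.range (N^4), ∑ j ∈ Finset.Icc 1 N,
            |∫ x, χ n x * (ψ (Bpt δ (n*N+j) x) - ψ (Bpt δ (n*N+j-1) x)) ∂P| :=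
          Finset.sum_le_sum (fun n _ => Finset.abs_sum_le_sum_abs _ _)
      _ ≤ ∑ n ∈ Finset.range (N^4), ∑ j ∈ Finset.Icc 1 N,
            (C3 * Real.sqrt (2*δ)^3 + δ*(C3*Real.sqrt (2*δ)) + (if j = 1 then δ*M2 else 0)) := by
          apply Finset.sum_le_sum
          intro n hn
          apply Finset.sum_le_sum
          intro j hj
          rw [Finset.mem_range] at hn
          rw [Finset.mem_Icc] at hj
          exact hterm n (by omega) j hj.1 hj.2
      _ = ((N^4:ℕ):ℝ) * ((N:ℝ)*(C3 * Real.sqrt (2*δ)^3 + δ*(C3*Real.sqrt (2*δ))) + δ*M2) := by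
          have hinner : ∀ n : ℕ, ∑ j ∈ Finset.Icc 1 N,
              (C3 * Real.sqrt (2*δ)^3 + δ*(C3*Real.sqrt (2*δ)) + (if j = 1 then δ*M2 else 0))
              = (N:ℝ)*(C3 * Real.sqrt (2*δ)^3 + δ*(C3*Real.sqrt (2*δ))) + δ*M2 := by
            intro n
            rw [Finset.sum_add_distrib, Finset.sum_const, Nat.card_Icc]
            rw [Finset.sum_ite_eq' (Finset.Icc 1 N) 1 (fun _ => δ*M2)]
            rw [if_pos (by rw [Finset.mem_Icc]; omega)]
            simp only [Nat.add_sub_cancel, nsmul_eq_mul]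
          rw [Finset.sum_congr rfl (fun n _ => hinner n), Finset.sum_const, Finset.card_range,
            nsmul_eq_mul]
  refine le_trans htot ?_
  -- numeric estimate
  have hcube : Real.sqrt (2*δ)^3 ≤ (1/(N:ℝ)^2)^3 := by
    apply pow_le_pow_left₀ hsd0 hsd_le
  have t1 : ((N^4:ℕ):ℝ) * ((N:ℝ)*(C3 * Real.sqrt (2*δ)^3 + δ*(C3*Real.sqrt (2*δ))) + δ*M2)
      = (N:ℝ)^5*C3*Real.sqrt (2*δ)^3 + ((N:ℝ)^5*δ*C3)*Real.sqrt (2*δ) + (N:ℝ)^4*δ*M2 := by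
    push_cast
    ring
  rw [t1]
  have t2 : (N:ℝ)^5*C3*Real.sqrt (2*δ)^3 ≤ (N:ℝ)^5*C3*(1/(N:ℝ)^2)^3 :=
    mul_le_mul_of_nonneg_left hcube (by positivity)
  have t3 : ((N:ℝ)^5*δ*C3)*Real.sqrt (2*δ) ≤ ((N:ℝ)^5*δ*C3)*(1/(N:ℝ)^2) := by
    apply mul_le_mul_of_nonneg_left hsd_le
    have := le_of_lt hδ0
    positivity
  have t4 : (N:ℝ)^5*C3*(1/(N:ℝ)^2)^3 + ((N:ℝ)^5*δ*C3)*(1/(N:ℝ)^2) + (N:ℝ)^4*δ*M2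
      = C3*(1/(N:ℝ)) + C3*T*(1/(N:ℝ)^2) + M2*T*(1/(N:ℝ)) := by
    rw [hδdef]
    field_simp
  have t5 : C3*T*(1/(N:ℝ)^2) ≤ C3*T*(1/(N:ℝ)) := by
    apply mul_le_mul_of_nonneg_left _ (by positivity)
    rw [div_le_div_iff₀ (by positivity) hN0]
    nlinarith
  have t6 : C3*(1/(N:ℝ)) + C3*T*(1/(N:ℝ)) + M2*T*(1/(N:ℝ)) = (M2*T + C3*(1+T))/N := by
    field_simp
    ring
  linarith

end S16

/-- weak convergence of the stopped coarse walk: for harmonic `ψ`,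
`lim_{T→∞} limsup_{N→∞} |E ψ(X_{n_ε}) - ψ(0,0)| = 0`. -/
theorem statement16 (ψ : ℝ × ℝ → ℝ) (U : Set (ℝ × ℝ))
    (hU : IsOpen U) (hUD : closedDisc ⊆ U) (hψ : ContDiffOn ℝ (⊤ : ℕ∞) ψ U)
    (hharm : ∀ y ∈ openDisc, pd1 (pd1 ψ) y + pd2 (pd2 ψ) y = 0) :
    Tendsto (fun T : ℝ =>
      limsup (fun N : ℕ =>
        |(∫ x, ψ (Bpt (T / (N : ℝ) ^ 5)
              (nstop (T / (N : ℝ) ^ 5) (1 / (N : ℝ)) N x * N) x) ∂P) -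
          ψ (0, 0)|) atTop)
      atTop (nhds 0) := by
  obtain ⟨M2, C3, hM20, hC30, hM2a, hM2b, hlip1, hlip2⟩ := S16.const_spec hU hUD hψ
  have hzero : ∀ T : ℝ, 0 < T →
      limsup (fun N : ℕ =>
        |(∫ x, ψ (Bpt (T / (N : ℝ) ^ 5)
              (nstop (T / (N : ℝ) ^ 5) (1 / (N : ℝ)) N x * N) x) ∂P) -
          ψ (0, 0)|) atTop = 0 := by
    intro T hT
    apply Filter.Tendsto.limsup_eq
    apply squeeze_zero' (Filter.Eventually.of_forall (fun N => abs_nonneg _))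
      (g := fun N : ℕ => (M2*T + C3*(1+T))/N)
    · filter_upwards [Filter.eventually_ge_atTop (max 2 ⌈2*T+1⌉₊)] with N hN
      have h2 : 2 ≤ N := le_trans (le_max_left _ _) hN
      have h3 : 2*T+1 ≤ (N:ℝ) := by
        have h4 := le_trans (le_max_right _ _) hN
        calc 2*T+1 ≤ (⌈2*T+1⌉₊ : ℝ) := Nat.le_ceil _
          _ ≤ N := by exact_mod_cast h4
      exact S16.main_est hU hUD hψ hharm hM20 hC30 hM2a hM2b hlip1 hlip2 hT h2 h3
    · exact tendsto_const_div_atTop_nhds_zero_nat _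
  have hevq : (fun _ : ℝ => (0:ℝ)) =ᶠ[atTop]
      (fun T : ℝ => limsup (fun N : ℕ =>
        |(∫ x, ψ (Bpt (T / (N : ℝ) ^ 5)
              (nstop (T / (N : ℝ) ^ 5) (1 / (N : ℝ)) N x * N) x) ∂P) -
          ψ (0, 0)|) atTop) := by
    filter_upwards [Filter.eventually_gt_atTop 0] with T hT
    exact (hzero T hT).symm
  exact Filter.Tendsto.congr' hevq tendsto_const_nhds

end
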